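/- arXiv:2103.14352 — 4 statements merged into one kernel-verified Lean document; each statement's English description precedes it below -/
import Mathlib

section
/- Suppose (u_h, r_h, w_h, p_h, s_h) solves the dissipative semi-discrete LDG Scheme D2 on [0,T]. Then for every t ∈ [0,T]: (d/dt) ∫_a^b w_h(t,x) dx = 0 (conservation of the quantity E₁) and (d/dt) ∫_a^b u_h(t,x)² dx ≤ 0 (dissipation of the energy E₂). -/
open Polynomial Set

noncomputable section

namespace FW

variable {N : ℕ}

/-- Minus trace `ω⁻` at interface `j+1/2` (right end of cell `j`). -/
def trM (x : Fin (N + 1) → ℝ) (ω : Fin N → Polynomial ℝ) (j : Fin N) : ℝ :=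
  (ω j).eval (x j.succ)

/-- Plus trace `ω⁺` at interface `j+1/2` (left end of the next cell, cyclically). -/
def trP [NeZero N] (x : Fin (N + 1) → ℝ) (ω : Fin N → Polynomial ℝ) (j : Fin N) : ℝ :=
  (ω (j + 1)).eval (x (j + 1).castSucc)

/-- Average trace `{ω}`. -/
def trA [NeZero N] (x : Fin (N + 1) → ℝ) (ω : Fin N → Polynomial ℝ) (j : Fin N) : ℝ :=
  (trP x ω j + trM x ω j) / 2

/-- Jump `[ω]`. -/
def jmp [NeZero N] (x : Fin (N + 1) → ℝ) (ω : Fin N → Polynomial ℝ) (j : Fin N) : ℝ :=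
  trP x ω j - trM x ω j

/-- Cell L² pairing `(u, φ)_{I_j}` of a piecewise polynomial with a test polynomial. -/
def ipj (x : Fin (N + 1) → ℝ) (u : Fin N → Polynomial ℝ) (j : Fin N) (φ : Polynomial ℝ) : ℝ :=
  ∫ t in (x j.castSucc)..(x j.succ), (u j).eval t * φ.eval t

/-- Cell pairing `(f∘u, φ)_{I_j}`. -/
def ipfj (x : Fin (N + 1) → ℝ) (f : ℝ → ℝ) (u : Fin N → Polynomial ℝ) (j : Fin N)
    (φ : Polynomial ℝ) : ℝ :=
  ∫ t in (x j.castSucc)..(x j.succ), f ((u j).eval t) * φ.eval t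

/-- Boundary pairing `⟨g, φ⟩_{I_j}` for interface values `g`. -/
def bdj [NeZero N] (x : Fin (N + 1) → ℝ) (g : Fin N → ℝ) (j : Fin N) (φ : Polynomial ℝ) : ℝ :=
  g j * φ.eval (x j.succ) - g (j - 1) * φ.eval (x j.castSucc)

/-- Membership in the space `V_h^k` of piecewise polynomials of degree at most `k`. -/
def memV (k : ℕ) (ω : Fin N → Polynomial ℝ) : Prop :=
  ∀ j, (ω j).degree ≤ (k : WithBot ℕ)

/-- `L⁻(ω, φ)`. -/
def Lm [NeZero N] (x : Fin (N + 1) → ℝ) (ω φ : Fin N → Polynomial ℝ) : ℝ :=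
  ∑ j, (-(ipj x ω j (derivative (φ j))) + bdj x (trM x ω) j (φ j))

/-- `L⁺(ω, φ)`. -/
def Lp [NeZero N] (x : Fin (N + 1) → ℝ) (ω φ : Fin N → Polynomial ℝ) : ℝ :=
  ∑ j, (-(ipj x ω j (derivative (φ j))) + bdj x (trP x ω) j (φ j))

/-- `L^c(ω, φ)`. -/
def Lc [NeZero N] (x : Fin (N + 1) → ℝ) (ω φ : Fin N → Polynomial ℝ) : ℝ :=
  ∑ j, (-(ipj x ω j (derivative (φ j))) + bdj x (trA x ω) j (φ j))

/-- Godunov numerical flux. -/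
def godunov (f : ℝ → ℝ) (c d : ℝ) : ℝ :=
  if c < d then sInf (f '' Set.Icc c d) else sSup (f '' Set.Icc d c)

/-- Conservative numerical flux for `f(u) = u^p/p`, `F(u) = u^(p+1)/(p(p+1))`. -/
def consFlux (p : ℕ) (c d : ℝ) : ℝ :=
  if c = d then c ^ p / (p : ℝ)
  else (d ^ (p + 1) / ((p : ℝ) * ((p : ℝ) + 1)) - c ^ (p + 1) / ((p : ℝ) * ((p : ℝ) + 1))) / (d - c)

/-- Dissipative (Godunov-flux) nonlinear form `N^d`. -/
def Nd [NeZero N] (x : Fin (N + 1) → ℝ) (f : ℝ → ℝ) (ω φ : Fin N → Polynomial ℝ) : ℝ :=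
  ∑ j, (-(ipfj x f ω j (derivative (φ j)))
    + bdj x (fun i => godunov f (trM x ω i) (trP x ω i)) j (φ j))

/-- Conservative-flux nonlinear form `N^c`. -/
def Nc [NeZero N] (x : Fin (N + 1) → ℝ) (p : ℕ) (ω φ : Fin N → Polynomial ℝ) : ℝ :=
  ∑ j, (-(ipfj x (fun w => w ^ p / (p : ℝ)) ω j (derivative (φ j)))
    + bdj x (fun i => consFlux p (trM x ω i) (trP x ω i)) j (φ j))

end FW

namespace FWAux

open FW intervalIntegral MeasureTheory

variable {N : ℕ}

lemma polyII (P : Polynomial ℝ) (c d : ℝ) :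
    IntervalIntegrable (fun y => P.eval y) volume c d :=
  P.continuous.intervalIntegrable _ _

/-- Integration of a polynomial over an interval, as a linear map. -/
def cellInt (c d : ℝ) : Polynomial ℝ →ₗ[ℝ] ℝ where
  toFun Q := ∫ y in c..d, Q.eval y
  map_add' P Q := by
    simp only [eval_add]
    exact integral_add (polyII P c d) (polyII Q c d)
  map_smul' a P := by
    simp only [eval_smul, RingHom.id_apply, smul_eq_mul]
    exact integral_const_mul a _

lemma cellInt_apply (c d : ℝ) (Q : Polynomial ℝ) :
    cellInt c d Q = ∫ y in c..d, Q.eval y := rfl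

lemma ipj_eq (x : Fin (N + 1) → ℝ) (u : Fin N → Polynomial ℝ) (j : Fin N) (φ : Polynomial ℝ) :
    ipj x u j φ = cellInt (x j.castSucc) (x j.succ) (u j * φ) := by
  simp [ipj, cellInt_apply, eval_mul]

lemma ipj_symm (x : Fin (N + 1) → ℝ) (u v : Fin N → Polynomial ℝ) (j : Fin N) :
    ipj x u j (v j) = ipj x v j (u j) := by
  simp [ipj_eq, mul_comm]

lemma integral_deriv (Q : Polynomial ℝ) (c d : ℝ) :
    ∫ y in c..d, (derivative Q).eval y = Q.eval d - Q.eval c :=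
  integral_eq_sub_of_hasDerivAt (fun y _ => Q.hasDerivAt y) (polyII _ c d)

lemma cell_ibp (x : Fin (N + 1) → ℝ) (ω φ : Fin N → Polynomial ℝ) (j : Fin N) :
    ipj x ω j (derivative (φ j)) + ipj x φ j (derivative (ω j))
      = (ω j * φ j).eval (x j.succ) - (ω j * φ j).eval (x j.castSucc) := by
  have h1 : ipj x ω j (derivative (φ j)) + ipj x φ j (derivative (ω j))
      = cellInt (x j.castSucc) (x j.succ) (derivative (ω j * φ j)) := by
    rw [ipj_eq, ipj_eq, ← map_add, derivative_mul]
    ring_nf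
  rw [h1, cellInt_apply, integral_deriv]

lemma sum_shift [NeZero N] (g : Fin N → ℝ) : ∑ j, g (j - 1) = ∑ j, g j :=
  Fintype.sum_equiv (Equiv.subRight (1 : Fin N)) _ _ (fun _ => rfl)

lemma sum_tel [NeZero N] (g : Fin N → ℝ) : ∑ j, (g j - g (j - 1)) = 0 := by
  rw [Finset.sum_sub_distrib, sum_shift g, sub_self]

lemma trP_sub_one [NeZero N] (x : Fin (N + 1) → ℝ) (ω : Fin N → Polynomial ℝ) (j : Fin N) :
    trP x ω (j - 1) = (ω j).eval (x j.castSucc) := by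
  simp [trP, sub_add_cancel]

/-- The discrete integration-by-parts/adjoint identity `L⁺(ω,φ) = -L⁻(φ,ω)`. -/
lemma adj [NeZero N] (x : Fin (N + 1) → ℝ) (ω φ : Fin N → Polynomial ℝ) :
    Lp x ω φ + Lm x φ ω = 0 := by
  unfold FW.Lp FW.Lm
  rw [← Finset.sum_add_distrib]
  have hcell : ∀ j : Fin N,
      (-(ipj x ω j (derivative (φ j))) + bdj x (trP x ω) j (φ j))
        + (-(ipj x φ j (derivative (ω j))) + bdj x (trM x φ) j (ω j))
      = (fun i => trP x ω i * trM x φ i) j - (fun i => trP x ω i * trM x φ i) (j - 1) := by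
    intro j
    have h := cell_ibp x ω φ j
    simp only [eval_mul] at h
    simp only [bdj, trM, trP, sub_add_cancel]
    linarith [h]
  rw [Finset.sum_congr rfl (fun j _ => hcell j)]
  exact sum_tel _

lemma lp_self [NeZero N] (x : Fin (N + 1) → ℝ) (v : Fin N → Polynomial ℝ) :
    Lp x v v = -(∑ j, (jmp x v j) ^ 2) / 2 := by
  have hadj := adj x v v
  have hdiff : Lp x v v - Lm x v v = -(∑ j, (jmp x v j) ^ 2) := by
    unfold FW.Lp FW.Lm
    rw [← Finset.sum_sub_distrib]
    have hcell : ∀ j : Fin N,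
        (-(ipj x v j (derivative (v j))) + bdj x (trP x v) j (v j))
          - (-(ipj x v j (derivative (v j))) + bdj x (trM x v) j (v j))
        = ((fun i => jmp x v i * trM x v i) j - (fun i => jmp x v i * trP x v i) (j - 1)) := by
      intro j
      simp only [bdj, jmp, trM, trP, sub_add_cancel]
      ring
    rw [Finset.sum_congr rfl (fun j _ => hcell j), Finset.sum_sub_distrib,
      sum_shift (fun i => jmp x v i * trP x v i), ← Finset.sum_sub_distrib]
    rw [← neg_eq_iff_eq_neg] at *
    rw [← Finset.sum_neg_distrib]
    refine Finset.sum_congr rfl fun j _ => ?_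
    simp only [jmp, trM, trP]
    ring
  linarith

lemma lp_self_nonpos [NeZero N] (x : Fin (N + 1) → ℝ) (v : Fin N → Polynomial ℝ) :
    Lp x v v ≤ 0 := by
  rw [lp_self]
  have : (0:ℝ) ≤ ∑ j, (jmp x v j) ^ 2 := Finset.sum_nonneg fun j _ => sq_nonneg _
  linarith

end FWAux

namespace FWAux
open FW intervalIntegral MeasureTheory
variable {N : ℕ}

section god

variable (p : ℕ)

lemma fcont : Continuous (fun w : ℝ => w ^ p / (p : ℝ)) := (continuous_pow p).div_const _

lemma hasDerivAtF (hp : 1 ≤ p) (y : ℝ) :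
    HasDerivAt (fun w : ℝ => w ^ (p+1) / ((p:ℝ) * ((p:ℝ)+1))) (y ^ p / (p:ℝ)) y := by
  have h := (hasDerivAt_pow (p+1) y).div_const ((p:ℝ) * ((p:ℝ)+1))
  have hp0 : (p:ℝ) ≠ 0 := Nat.cast_ne_zero.mpr (by omega)
  have hp1 : (p:ℝ) + 1 ≠ 0 := by positivity
  refine h.congr_deriv ?_
  simp only [Nat.add_sub_cancel, Nat.cast_add, Nat.cast_one]
  field_simp

lemma fFTC (hp : 1 ≤ p) (a b : ℝ) :
    ∫ y in a..b, y ^ p / (p:ℝ) = b ^ (p+1) / ((p:ℝ) * ((p:ℝ)+1)) - a ^ (p+1) / ((p:ℝ) * ((p:ℝ)+1)) :=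
  integral_eq_sub_of_hasDerivAt (fun y _ => hasDerivAtF p hp y) ((fcont p).intervalIntegrable _ _)

/-- entropy inequality for the Godunov flux of `f(u)=u^p/p`. -/
lemma godunov_sign (hp : 1 ≤ p) (c d : ℝ) :
    0 ≤ godunov (fun w => w ^ p / (p : ℝ)) c d * (c - d)
        - c ^ (p+1) / ((p:ℝ) * ((p:ℝ)+1)) + d ^ (p+1) / ((p:ℝ) * ((p:ℝ)+1)) := by
  set f : ℝ → ℝ := fun w => w ^ p / (p : ℝ) with hf
  by_cases h : c < d
  · rw [godunov, if_pos h]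
    set g := sInf (f '' Set.Icc c d) with hg
    have hbd : BddBelow (f '' Set.Icc c d) := (isCompact_Icc.image (fcont p)).bddBelow
    have hle : ∀ y ∈ Set.Icc c d, g ≤ f y := fun y hy => csInf_le hbd ⟨y, hy, rfl⟩
    have hmono := intervalIntegral.integral_mono_on h.le
      (_root_.intervalIntegrable_const (μ := volume) (c := g)) ((fcont p).intervalIntegrable c d) hle
    rw [intervalIntegral.integral_const, fFTC p hp] at hmono
    simp only [smul_eq_mul] at hmono
    nlinarith [hmono]
  · rw [godunov, if_neg h]
    push_neg at h
    set g := sSup (f '' Set.Icc d c) with hg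
    have hbd : BddAbove (f '' Set.Icc d c) := (isCompact_Icc.image (fcont p)).bddAbove
    have hle : ∀ y ∈ Set.Icc d c, f y ≤ g := fun y hy => le_csSup hbd ⟨y, hy, rfl⟩
    have hmono := intervalIntegral.integral_mono_on h
      ((fcont p).intervalIntegrable d c) (_root_.intervalIntegrable_const (μ := volume) (c := g)) hle
    rw [intervalIntegral.integral_const, fFTC p hp] at hmono
    simp only [smul_eq_mul] at hmono
    nlinarith [hmono]

/-- the cell-entropy sum: `N^d(U,U) ≥ 0`. -/
lemma nd_self_nonneg [NeZero N] (x : Fin (N + 1) → ℝ) (hp : 1 ≤ p)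
    (U : Fin N → Polynomial ℝ) :
    0 ≤ Nd x (fun w => w ^ p / (p : ℝ)) U U := by
  set f : ℝ → ℝ := fun w => w ^ p / (p : ℝ) with hf
  set F : ℝ → ℝ := fun w => w ^ (p+1) / ((p:ℝ) * ((p:ℝ)+1)) with hF
  set fh : Fin N → ℝ := fun i => godunov f (trM x U i) (trP x U i) with hfh
  have hcellint : ∀ j : Fin N, ipfj x f U j (derivative (U j))
      = F (trM x U j) - F (trP x U (j - 1)) := by
    intro j
    have hftc : ∫ y in (x j.castSucc)..(x j.succ), f ((U j).eval y) * (derivative (U j)).eval y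
        = F ((U j).eval (x j.succ)) - F ((U j).eval (x j.castSucc)) := by
      refine integral_eq_sub_of_hasDerivAt (f := fun z => F ((U j).eval z)) ?_ ?_
      · intro y _
        have h1 : HasDerivAt (fun w : ℝ => F w) (f ((U j).eval y)) ((fun z => (U j).eval z) y) :=
          hasDerivAtF p hp _
        have := h1.comp y ((U j).hasDerivAt y)
        simpa [Function.comp_def] using this
      · exact (((fcont p).comp (U j).continuous).mul (derivative (U j)).continuous).intervalIntegrable _ _
    rw [ipfj, hftc, trP_sub_one, trM]
  unfold FW.Nd
  have hcell : ∀ j : Fin N,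
      (-(ipfj x f U j (derivative (U j))) + bdj x fh j (U j))
      = (godunov f (trM x U j) (trP x U j) * (trM x U j - trP x U j)
          - F (trM x U j) + F (trP x U j))
        + ((fun i => fh i * trP x U i - F (trP x U i)) j
          - (fun i => fh i * trP x U i - F (trP x U i)) (j - 1)) := by
    intro j
    rw [hcellint j]
    simp only [bdj, trM, trP_sub_one]
    have : fh (j-1) = godunov f (trM x U (j-1)) (trP x U (j-1)) := rfl
    rw [this, trP_sub_one]
    simp only [hfh, trM]
    ring
  rw [Finset.sum_congr rfl (fun j _ => hcell j), Finset.sum_add_distrib, sum_tel, add_zero]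
  refine Finset.sum_nonneg fun j _ => ?_
  exact godunov_sign p hp (trM x U j) (trP x U j)

end god
end FWAux

namespace FWAux
open FW intervalIntegral MeasureTheory
variable {N : ℕ}

lemma poly_sq_int_zero {c d : ℝ} (h : c < d) {P : Polynomial ℝ}
    (hz : ∫ y in c..d, (P.eval y) ^ 2 = 0) : P = 0 := by
  by_contra hP
  have hcont : Continuous fun y => (P.eval y) ^ 2 := P.continuous.pow 2
  have hae := (integral_eq_zero_iff_of_le_of_nonneg_ae h.le
    (Filter.Eventually.of_forall fun y => sq_nonneg _)
    (hcont.intervalIntegrable _ _)).mp hz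
  have hae2 : ∀ᵐ y ∂(volume.restrict (Set.Ioc c d)), P.eval y = 0 := by
    filter_upwards [hae] with y hy
    exact pow_eq_zero_iff (n := 2) (by norm_num) |>.mp hy
  have hae3 : ∀ᵐ y ∂(volume : Measure ℝ), y ∈ Set.Ioc c d → P.eval y = 0 :=
    (ae_restrict_iff' measurableSet_Ioc).mp hae2
  have hnull : volume {y : ℝ | ¬ (y ∈ Set.Ioc c d → P.eval y = 0)} = 0 := hae3
  have hroots : ({y : ℝ | P.eval y = 0} : Set ℝ).Finite := Polynomial.finite_setOf_isRoot hP
  have hsub : Set.Ioc c d ⊆ {y : ℝ | ¬ (y ∈ Set.Ioc c d → P.eval y = 0)} ∪ {y : ℝ | P.eval y = 0} := by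
    intro y hy
    by_cases hr : P.eval y = 0
    · exact Or.inr hr
    · exact Or.inl (fun hcontra => hr (hcontra hy))
  have hle := (measure_mono hsub).trans (measure_union_le (μ := (volume : Measure ℝ)) _ _)
  have hz2 : volume (Set.Ioc c d) = 0 := by
    rw [hnull, hroots.measure_zero volume, add_zero] at hle
    exact le_antisymm hle (zero_le)
  rw [Real.volume_Ioc] at hz2
  have := ENNReal.ofReal_eq_zero.mp hz2
  linarith

lemma degree_lt_succ_iff {P : Polynomial ℝ} {k : ℕ} :
    P ∈ Polynomial.degreeLT ℝ (k+1) ↔ P.degree ≤ (k : WithBot ℕ) := by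
  rw [Polynomial.degreeLT_succ_eq_degreeLE, Polynomial.mem_degreeLE]

/-- master differentiation lemma: a linear functional applied to a family of polynomials
with coefficientwise derivatives and uniformly bounded degree. -/
lemma dlin (G : Polynomial ℝ →ₗ[ℝ] ℝ) (K : ℕ) (P : ℝ → Polynomial ℝ) (Pt' : Polynomial ℝ)
    {S : Set ℝ} {t : ℝ} (ht : t ∈ S)
    (hdegP : ∀ σ ∈ S, (P σ).degree ≤ (K : WithBot ℕ)) (hdegP' : Pt'.degree ≤ (K : WithBot ℕ))
    (hd : ∀ m, HasDerivWithinAt (fun σ => (P σ).coeff m) (Pt'.coeff m) S t) :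
    HasDerivWithinAt (fun σ => G (P σ)) (G Pt') S t := by
  have key : ∀ Q : Polynomial ℝ, Q.degree ≤ (K : WithBot ℕ) →
      G Q = ∑ m ∈ Finset.range (K+1), Q.coeff m * G (Polynomial.X ^ m) := by
    intro Q hQ
    have hnd : Q.natDegree < K + 1 :=
      Nat.lt_succ_of_le (Polynomial.natDegree_le_iff_degree_le.mpr hQ)
    conv_lhs => rw [Polynomial.as_sum_range' Q (K+1) hnd]
    rw [map_sum]
    refine Finset.sum_congr rfl fun m _ => ?_
    rw [← Polynomial.smul_X_eq_monomial, LinearMap.map_smul, smul_eq_mul]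
  have hder : HasDerivWithinAt (fun σ => ∑ m ∈ Finset.range (K+1), (P σ).coeff m * G (Polynomial.X ^ m))
      (∑ m ∈ Finset.range (K+1), Pt'.coeff m * G (Polynomial.X ^ m)) S t :=
    HasDerivWithinAt.fun_sum fun m _ => (hd m).mul_const _
  have hcongr := hder.congr (fun σ hσ => key (P σ) (hdegP σ hσ))
    (key (P t) (hdegP t ht))
  rw [← key Pt' hdegP'] at hcongr
  exact hcongr

lemma hasDerivWithinAt_coeff_mul {S : Set ℝ} {t : ℝ} (P Q : ℝ → Polynomial ℝ)
    (P' Q' : Polynomial ℝ)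
    (hP : ∀ m, HasDerivWithinAt (fun σ => (P σ).coeff m) (P'.coeff m) S t)
    (hQ : ∀ m, HasDerivWithinAt (fun σ => (Q σ).coeff m) (Q'.coeff m) S t) (m : ℕ) :
    HasDerivWithinAt (fun σ => (P σ * Q σ).coeff m) ((P' * Q t + P t * Q').coeff m) S t := by
  have hrw : ∀ σ, (P σ * Q σ).coeff m
      = ∑ y ∈ Finset.HasAntidiagonal.antidiagonal m, (P σ).coeff y.1 * (Q σ).coeff y.2 :=
    fun σ => Polynomial.coeff_mul _ _ _
  have hder : HasDerivWithinAt
      (fun σ => ∑ y ∈ Finset.HasAntidiagonal.antidiagonal m, (P σ).coeff y.1 * (Q σ).coeff y.2)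
      (∑ y ∈ Finset.HasAntidiagonal.antidiagonal m, (P'.coeff y.1 * (Q t).coeff y.2
        + (P t).coeff y.1 * Q'.coeff y.2)) S t :=
    HasDerivWithinAt.fun_sum fun y _ => (hP y.1).mul (hQ y.2)
  have hval : (∑ y ∈ Finset.HasAntidiagonal.antidiagonal m, (P'.coeff y.1 * (Q t).coeff y.2
        + (P t).coeff y.1 * Q'.coeff y.2)) = (P' * Q t + P t * Q').coeff m := by
    rw [Polynomial.coeff_add, Polynomial.coeff_mul, Polynomial.coeff_mul,
      Finset.sum_add_distrib]
  rw [hval] at hder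
  exact hder.congr (fun σ _ => hrw σ) (hrw t)

lemma deriv_eq_of_eqOn {f g : ℝ → ℝ} {a b : ℝ} {S : Set ℝ} {t : ℝ}
    (hUD : UniqueDiffOn ℝ S) (ht : t ∈ S)
    (hf : HasDerivWithinAt f a S t) (hg : HasDerivWithinAt g b S t)
    (heq : ∀ σ ∈ S, f σ = g σ) : a = b := by
  have h2 : HasDerivWithinAt f b S t :=
    hg.congr (fun y hy => heq y hy) (heq t ht)
  rw [← hf.derivWithin (hUD t ht), h2.derivWithin (hUD t ht)]

end FWAux

namespace FWAux
open FW intervalIntegral MeasureTheory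
variable {N k : ℕ}

instance : FiniteDimensional ℝ (Polynomial.degreeLT ℝ (k+1)) :=
  (Polynomial.degreeLTEquiv ℝ (k+1)).symm.finiteDimensional

/-- coercion of a `degreeLT`-tuple to a piecewise polynomial -/
def Wc (v : Fin N → Polynomial.degreeLT ℝ (k+1)) : Fin N → Polynomial ℝ :=
  fun j => (v j : Polynomial ℝ)

lemma memV_Wc (v : Fin N → Polynomial.degreeLT ℝ (k+1)) : memV k (Wc v) :=
  fun j => degree_lt_succ_iff.mp (v j).2

def toW (v : Fin N → Polynomial ℝ) (hv : memV k v) : Fin N → Polynomial.degreeLT ℝ (k+1) :=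
  fun j => ⟨v j, degree_lt_succ_iff.mpr (hv j)⟩

lemma Wc_toW (v : Fin N → Polynomial ℝ) (hv : memV k v) : Wc (toW v hv) = v := rfl

/-- the L² pairing as a bilinear map on the DG space -/
def BF (x : Fin (N+1) → ℝ) :
    (Fin N → Polynomial.degreeLT ℝ (k+1)) →ₗ[ℝ] (Fin N → Polynomial.degreeLT ℝ (k+1)) →ₗ[ℝ] ℝ :=
  LinearMap.mk₂ ℝ (fun v w => ∑ j, ipj x (Wc v) j (Wc w j))
    (by
      intro v v' w
      rw [← Finset.sum_add_distrib]
      refine Finset.sum_congr rfl fun j _ => ?_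
      simp only [ipj_eq, Wc, Pi.add_apply, Submodule.coe_add, add_mul, map_add])
    (by
      intro c v w
      rw [smul_eq_mul, Finset.mul_sum]
      refine Finset.sum_congr rfl fun j _ => ?_
      simp only [ipj_eq, Wc, Pi.smul_apply, Submodule.coe_smul, smul_mul_assoc,
        LinearMap.map_smul, smul_eq_mul])
    (by
      intro v w w'
      rw [← Finset.sum_add_distrib]
      refine Finset.sum_congr rfl fun j _ => ?_
      simp only [ipj_eq, Wc, Pi.add_apply, Submodule.coe_add, mul_add, map_add])
    (by
      intro c v w
      rw [smul_eq_mul, Finset.mul_sum]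
      refine Finset.sum_congr rfl fun j _ => ?_
      simp only [ipj_eq, Wc, Pi.smul_apply, Submodule.coe_smul, mul_smul_comm,
        LinearMap.map_smul, smul_eq_mul])

lemma BF_apply (x : Fin (N+1) → ℝ) (v w : Fin N → Polynomial.degreeLT ℝ (k+1)) :
    BF x v w = ∑ j, ipj x (Wc v) j (Wc w j) := rfl

/-- `L⁺` as a bilinear map on the DG space -/
def LpF [NeZero N] (x : Fin (N+1) → ℝ) :
    (Fin N → Polynomial.degreeLT ℝ (k+1)) →ₗ[ℝ] (Fin N → Polynomial.degreeLT ℝ (k+1)) →ₗ[ℝ] ℝ :=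
  LinearMap.mk₂ ℝ (fun v w => Lp x (Wc v) (Wc w))
    (by
      intro v v' w
      unfold FW.Lp
      rw [← Finset.sum_add_distrib]
      refine Finset.sum_congr rfl fun j _ => ?_
      simp only [ipj_eq, Wc, bdj, trP, Pi.add_apply, Submodule.coe_add, Polynomial.eval_add,
        add_mul, map_add]
      ring)
    (by
      intro c v w
      unfold FW.Lp
      rw [smul_eq_mul, Finset.mul_sum]
      refine Finset.sum_congr rfl fun j _ => ?_
      simp only [ipj_eq, Wc, bdj, trP, Pi.smul_apply, Submodule.coe_smul, Polynomial.eval_smul,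
        smul_mul_assoc, LinearMap.map_smul, smul_eq_mul]
      ring)
    (by
      intro v w w'
      unfold FW.Lp
      rw [← Finset.sum_add_distrib]
      refine Finset.sum_congr rfl fun j _ => ?_
      simp only [ipj_eq, Wc, bdj, trP, Pi.add_apply, Submodule.coe_add, Polynomial.eval_add,
        Polynomial.derivative_add, mul_add, map_add]
      ring)
    (by
      intro c v w
      unfold FW.Lp
      rw [smul_eq_mul, Finset.mul_sum]
      refine Finset.sum_congr rfl fun j _ => ?_
      simp only [ipj_eq, Wc, bdj, trP, Pi.smul_apply, Submodule.coe_smul, Polynomial.eval_smul,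
        Polynomial.derivative_smul, mul_smul_comm, LinearMap.map_smul, smul_eq_mul]
      ring)

lemma LpF_apply [NeZero N] (x : Fin (N+1) → ℝ) (v w : Fin N → Polynomial.degreeLT ℝ (k+1)) :
    LpF x v w = Lp x (Wc v) (Wc w) := rfl

/-- `L⁻` as a bilinear map on the DG space -/
def LmF [NeZero N] (x : Fin (N+1) → ℝ) :
    (Fin N → Polynomial.degreeLT ℝ (k+1)) →ₗ[ℝ] (Fin N → Polynomial.degreeLT ℝ (k+1)) →ₗ[ℝ] ℝ :=
  LinearMap.mk₂ ℝ (fun v w => Lm x (Wc v) (Wc w))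
    (by
      intro v v' w
      unfold FW.Lm
      rw [← Finset.sum_add_distrib]
      refine Finset.sum_congr rfl fun j _ => ?_
      simp only [ipj_eq, Wc, bdj, trM, Pi.add_apply, Submodule.coe_add, Polynomial.eval_add,
        add_mul, map_add]
      ring)
    (by
      intro c v w
      unfold FW.Lm
      rw [smul_eq_mul, Finset.mul_sum]
      refine Finset.sum_congr rfl fun j _ => ?_
      simp only [ipj_eq, Wc, bdj, trM, Pi.smul_apply, Submodule.coe_smul, Polynomial.eval_smul,
        smul_mul_assoc, LinearMap.map_smul, smul_eq_mul]
      ring)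
    (by
      intro v w w'
      unfold FW.Lm
      rw [← Finset.sum_add_distrib]
      refine Finset.sum_congr rfl fun j _ => ?_
      simp only [ipj_eq, Wc, bdj, trM, Pi.add_apply, Submodule.coe_add, Polynomial.eval_add,
        Polynomial.derivative_add, mul_add, map_add]
      ring)
    (by
      intro c v w
      unfold FW.Lm
      rw [smul_eq_mul, Finset.mul_sum]
      refine Finset.sum_congr rfl fun j _ => ?_
      simp only [ipj_eq, Wc, bdj, trM, Pi.smul_apply, Submodule.coe_smul, Polynomial.eval_smul,
        Polynomial.derivative_smul, mul_smul_comm, LinearMap.map_smul, smul_eq_mul]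
      ring)

lemma LmF_apply [NeZero N] (x : Fin (N+1) → ℝ) (v w : Fin N → Polynomial.degreeLT ℝ (k+1)) :
    LmF x v w = Lm x (Wc v) (Wc w) := rfl

lemma BF_nonneg (x : Fin (N+1) → ℝ) (hx : StrictMono x)
    (v : Fin N → Polynomial.degreeLT ℝ (k+1)) : 0 ≤ BF x v v := by
  rw [BF_apply]
  refine Finset.sum_nonneg fun j _ => ?_
  rw [ipj]
  refine intervalIntegral.integral_nonneg (hx (Fin.castSucc_lt_succ : j.castSucc < j.succ)).le fun y _ => ?_
  exact mul_self_nonneg _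

lemma BF_zero (x : Fin (N+1) → ℝ) (hx : StrictMono x)
    (v : Fin N → Polynomial.degreeLT ℝ (k+1)) (hz : BF x v v = 0) : v = 0 := by
  rw [BF_apply] at hz
  have hnn : ∀ j ∈ Finset.univ, (0:ℝ) ≤ ipj x (Wc v) j (Wc v j) := by
    intro j _
    rw [ipj]
    exact intervalIntegral.integral_nonneg (hx (Fin.castSucc_lt_succ : j.castSucc < j.succ)).le
      fun y _ => mul_self_nonneg _
  have hall := (Finset.sum_eq_zero_iff_of_nonneg hnn).mp hz
  funext j
  have hj := hall j (Finset.mem_univ j)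
  rw [ipj] at hj
  have : (Wc v j : Polynomial ℝ) = 0 := by
    apply poly_sq_int_zero (hx (Fin.castSucc_lt_succ : j.castSucc < j.succ))
    rw [← hj]
    refine intervalIntegral.integral_congr fun y _ => ?_
    rw [sq]
  exact Subtype.ext this

end FWAux

namespace FWAux
open FW intervalIntegral MeasureTheory
variable {N : ℕ}

lemma sum_ipj_symm (x : Fin (N+1) → ℝ) (A B : Fin N → Polynomial ℝ) :
    ∑ j, ipj x A j (B j) = ∑ j, ipj x B j (A j) :=
  Finset.sum_congr rfl fun j _ => ipj_symm x A B j

lemma key_ineq [NeZero N] (x : Fin (N+1) → ℝ) (hx : StrictMono x) {k p : ℕ} (hp : 1 ≤ p)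
    (U U' R' W' P S : Fin N → Polynomial ℝ)
    (hU : memV k U) (hU' : memV k U') (hR' : memV k R') (hS : memV k S) (hP : memV k P)
    (h1' : ∀ φ, memV k φ → (∑ j, ipj x U' j (φ j)) - Lm x R' φ = ∑ j, ipj x W' j (φ j))
    (h2' : ∀ φ, memV k φ → (∑ j, ipj x R' j (φ j)) = Lp x U' φ)
    (h3 : ∀ φ, memV k φ → (∑ j, ipj x W' j (φ j)) + (∑ j, ipj x S j (φ j)) = Lm x P φ)
    (h4 : ∀ φ, memV k φ → (∑ j, ipj x P j (φ j)) = Lp x S φ - ∑ j, ipj x U j (φ j))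
    (h5 : (∑ j, ipj x S j (U j)) = Nd x (fun w => w ^ p / (p : ℝ)) U U) :
    (∑ j, ipj x U' j (U j)) ≤ 0 := by
  classical
  set B := (BF (k := k) x) with hB
  -- B is injective into the dual
  have binj : Function.Injective B := by
    intro v w h
    have hz : B (v - w) = 0 := by rw [map_sub, h, sub_self]
    have hzz : B (v - w) (v - w) = 0 := by rw [hz]; rfl
    have := BF_zero x hx _ hzz
    exact sub_eq_zero.mp this
  have bsurj : Function.Surjective
      (B : (Fin N → Polynomial.degreeLT ℝ (k+1)) →ₗ[ℝ]
        Module.Dual ℝ (Fin N → Polynomial.degreeLT ℝ (k+1))) :=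
    (LinearMap.injective_iff_surjective_of_finrank_eq_finrank
      Subspace.dual_finrank_eq.symm).mp binj
  let e : (Fin N → Polynomial.degreeLT ℝ (k+1)) ≃ₗ[ℝ]
      Module.Dual ℝ (Fin N → Polynomial.degreeLT ℝ (k+1)) :=
    LinearEquiv.ofBijective B ⟨binj, bsurj⟩
  let Lplus : (Fin N → Polynomial.degreeLT ℝ (k+1)) →ₗ[ℝ]
      (Fin N → Polynomial.degreeLT ℝ (k+1)) :=
    e.symm.toLinearMap ∘ₗ (LpF (k := k) x)
  have hLplus : ∀ v φ, B (Lplus v) φ = Lp x (Wc v) (Wc φ) := by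
    intro v φ
    have h1 : B (Lplus v) = LpF (k := k) x v := by
      have := e.apply_symm_apply (LpF (k := k) x v)
      exact this
    rw [h1, LpF_apply]
  let A : (Fin N → Polynomial.degreeLT ℝ (k+1)) →ₗ[ℝ]
      (Fin N → Polynomial.degreeLT ℝ (k+1)) :=
    LinearMap.id - (e.symm.toLinearMap ∘ₗ (LmF (k := k) x) ∘ₗ Lplus)
  have hA : ∀ v φ, B (A v) φ = B v φ - Lm x (Wc (Lplus v)) (Wc φ) := by
    intro v φ
    have h1 : A v = v - e.symm (LmF (k := k) x (Lplus v)) := rfl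
    rw [h1, map_sub, LinearMap.sub_apply]
    have h2 : B (e.symm (LmF (k := k) x (Lplus v))) = LmF (k := k) x (Lplus v) :=
      e.apply_symm_apply _
    rw [h2, LmF_apply]
  have Ainj : Function.Injective A := by
    rw [← LinearMap.ker_eq_bot]
    rw [LinearMap.ker_eq_bot']
    intro v hv
    have h1 := hA v v
    rw [hv] at h1
    have h2 : B (0 : Fin N → Polynomial.degreeLT ℝ (k+1)) v = 0 := by
      rw [map_zero]; rfl
    rw [h2] at h1
    have hadj := adj x (Wc v) (Wc (Lplus v))
    have h3 : Lp x (Wc v) (Wc (Lplus v)) = B (Lplus v) (Lplus v) := (hLplus v (Lplus v)).symm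
    have hbvv : B v v + B (Lplus v) (Lplus v) = 0 := by linarith
    have hnn1 := BF_nonneg x hx v
    have hnn2 := BF_nonneg x hx (Lplus v)
    rw [← hB] at hnn1 hnn2
    exact BF_zero x hx v (by linarith)
  have Asurj : Function.Surjective A := LinearMap.injective_iff_surjective.mp Ainj
  obtain ⟨Vs, hVs⟩ := Asurj (toW U hU)
  set vs := Wc Vs with hvs
  set rs := Wc (Lplus Vs) with hrs
  have memvs : memV k vs := memV_Wc Vs
  have memrs : memV k rs := memV_Wc (Lplus Vs)
  have hRs : ∀ φ, memV k φ → (∑ j, ipj x rs j (φ j)) = Lp x vs φ := by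
    intro φ hφ
    have h := hLplus Vs (toW φ hφ)
    rw [BF_apply] at h
    exact h
  have hAeq : ∀ φ, memV k φ → (∑ j, ipj x vs j (φ j)) - Lm x rs φ = ∑ j, ipj x U j (φ j) := by
    intro φ hφ
    have h := hA Vs (toW φ hφ)
    rw [hVs, BF_apply, BF_apply] at h
    have hWU : Wc (toW U hU) = U := rfl
    have hWφ : Wc (toW φ hφ) = φ := rfl
    rw [hWU, hWφ] at h
    linarith [h]
  -- the energy chain
  have E1 := h1' vs memvs
  have adj1 := adj x vs R'
  have HR' := hRs R' hR'
  have E2 := hAeq U' hU'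
  have adj2 := adj x U' rs
  have H2 := h2' rs memrs
  have E3 := h3 vs memvs
  have adj3 := adj x vs P
  have HP := hRs P hP
  have E4 := h4 rs memrs
  have adjS := adj x S rs
  have E5s := hAeq S hS
  have E6 := hAeq rs memrs
  have Hvs := hRs vs memvs
  have adjrr := adj x rs rs
  have lp1 := lp_self_nonpos x vs
  have lp2 := lp_self_nonpos x rs
  have nd := nd_self_nonneg p x hp U
  have s1 := sum_ipj_symm x U' vs
  have s2 := sum_ipj_symm x rs R'
  have s3 := sum_ipj_symm x U U'
  have s4 := sum_ipj_symm x rs P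
  have s5 := sum_ipj_symm x S vs
  have s6 := sum_ipj_symm x U S
  have s7 := sum_ipj_symm x rs vs
  rw [← h5] at nd
  linarith
end FWAux

namespace FWAux
open FW intervalIntegral MeasureTheory
variable {N : ℕ}

lemma dIpj (x : Fin (N+1) → ℝ) (k : ℕ) {S : Set ℝ} {t : ℝ} (ht : t ∈ S)
    (v : ℝ → Fin N → Polynomial ℝ) (v't : Fin N → Polynomial ℝ)
    (hdeg : ∀ σ ∈ S, memV k (v σ)) (hdeg' : memV k v't)
    (hd : ∀ (j : Fin N) (m : ℕ), HasDerivWithinAt (fun σ => (v σ j).coeff m) ((v't j).coeff m) S t)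
    (j : Fin N) (φ : Polynomial ℝ) :
    HasDerivWithinAt (fun σ => ipj x (v σ) j φ) (ipj x v't j φ) S t := by
  have h := dlin ((cellInt (x j.castSucc) (x j.succ)).comp (LinearMap.mulRight ℝ φ)) k
    (fun σ => v σ j) (v't j) ht (fun σ hσ => hdeg σ hσ j) (hdeg' j) (hd j)
  simpa [ipj_eq, LinearMap.comp_apply, LinearMap.mulRight_apply] using h

lemma dEval (x : Fin (N+1) → ℝ) (k : ℕ) {S : Set ℝ} {t : ℝ} (ht : t ∈ S)
    (v : ℝ → Fin N → Polynomial ℝ) (v't : Fin N → Polynomial ℝ)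
    (hdeg : ∀ σ ∈ S, memV k (v σ)) (hdeg' : memV k v't)
    (hd : ∀ (j : Fin N) (m : ℕ), HasDerivWithinAt (fun σ => (v σ j).coeff m) ((v't j).coeff m) S t)
    (i : Fin N) (pt : ℝ) :
    HasDerivWithinAt (fun σ => (v σ i).eval pt) ((v't i).eval pt) S t := by
  have h := dlin (Polynomial.leval pt) k (fun σ => v σ i) (v't i) ht
    (fun σ hσ => hdeg σ hσ i) (hdeg' i) (hd i)
  simpa [Polynomial.leval_apply] using h

lemma degmul {k : ℕ} {P Q : Polynomial ℝ} (hP : P.degree ≤ (k : WithBot ℕ))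
    (hQ : Q.degree ≤ (k : WithBot ℕ)) : (P * Q).degree ≤ ((k + k : ℕ) : WithBot ℕ) := by
  refine le_trans (Polynomial.degree_mul_le P Q) ?_
  push_cast
  exact add_le_add hP hQ

end FWAux


theorem stmt15 {N : ℕ} [NeZero N] (hN : 1 ≤ N) (a b : ℝ) (hab : a < b)
    (x : Fin (N + 1) → ℝ) (hx : StrictMono x) (hxa : x 0 = a) (hxb : x (Fin.last N) = b)
    (k : ℕ) (p : ℕ) (hp : 2 ≤ p) (T : ℝ) (hT : 0 < T)
    (u u' r r' w w' ph s : ℝ → Fin N → Polynomial ℝ)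
    (hdeg : ∀ t ∈ Set.Icc (0:ℝ) T,
      FW.memV k (u t) ∧ FW.memV k (u' t) ∧ FW.memV k (r t) ∧ FW.memV k (r' t)
        ∧ FW.memV k (w t) ∧ FW.memV k (w' t) ∧ FW.memV k (ph t) ∧ FW.memV k (s t))
    (hderu : ∀ t ∈ Set.Icc (0:ℝ) T, ∀ (j : Fin N) (m : ℕ),
      HasDerivWithinAt (fun σ => (u σ j).coeff m) ((u' t j).coeff m) (Set.Icc (0:ℝ) T) t)
    (hderr : ∀ t ∈ Set.Icc (0:ℝ) T, ∀ (j : Fin N) (m : ℕ),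
      HasDerivWithinAt (fun σ => (r σ j).coeff m) ((r' t j).coeff m) (Set.Icc (0:ℝ) T) t)
    (hderw : ∀ t ∈ Set.Icc (0:ℝ) T, ∀ (j : Fin N) (m : ℕ),
      HasDerivWithinAt (fun σ => (w σ j).coeff m) ((w' t j).coeff m) (Set.Icc (0:ℝ) T) t)
    (heq1 : ∀ t ∈ Set.Icc (0:ℝ) T, ∀ (j : Fin N), ∀ φ : Polynomial ℝ,
      φ.degree ≤ (k : WithBot ℕ) →
      FW.ipj x (u t) j φ - FW.bdj x (FW.trM x (r t)) j φ
          + FW.ipj x (r t) j (Polynomial.derivative φ)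
        = FW.ipj x (w t) j φ)
    (heq2 : ∀ t ∈ Set.Icc (0:ℝ) T, ∀ (j : Fin N), ∀ φ : Polynomial ℝ,
      φ.degree ≤ (k : WithBot ℕ) →
      FW.ipj x (r t) j φ - FW.bdj x (FW.trP x (u t)) j φ
          + FW.ipj x (u t) j (Polynomial.derivative φ) = 0)
    (heq3 : ∀ t ∈ Set.Icc (0:ℝ) T, ∀ (j : Fin N), ∀ φ : Polynomial ℝ,
      φ.degree ≤ (k : WithBot ℕ) →
      FW.ipj x (w' t) j φ + FW.ipj x (s t) j φ
        = FW.bdj x (FW.trM x (ph t)) j φ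
          - FW.ipj x (ph t) j (Polynomial.derivative φ))
    (heq4 : ∀ t ∈ Set.Icc (0:ℝ) T, ∀ (j : Fin N), ∀ φ : Polynomial ℝ,
      φ.degree ≤ (k : WithBot ℕ) →
      FW.ipj x (ph t) j φ
        = FW.bdj x (FW.trP x (s t)) j φ
          - FW.ipj x (s t) j (Polynomial.derivative φ) - FW.ipj x (u t) j φ)
    (heq5 : ∀ t ∈ Set.Icc (0:ℝ) T, ∀ (j : Fin N), ∀ φ : Polynomial ℝ,
      φ.degree ≤ (k : WithBot ℕ) →
      FW.ipj x (s t) j φ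
        = FW.bdj x (fun i => FW.godunov (fun w => w ^ p / (p : ℝ)) (FW.trM x (u t) i) (FW.trP x (u t) i)) j φ
          - FW.ipfj x (fun w => w ^ p / (p : ℝ)) (u t) j (Polynomial.derivative φ)) :
    (∀ t ∈ Set.Icc (0:ℝ) T,
      HasDerivWithinAt (fun σ => ∑ j : Fin N, ∫ y in (x j.castSucc)..(x j.succ), (w σ j).eval y) 0 (Set.Icc (0:ℝ) T) t)
    ∧ (∀ t ∈ Set.Icc (0:ℝ) T, ∃ e ≤ (0:ℝ),
      HasDerivWithinAt (fun σ => ∑ j : Fin N, ∫ y in (x j.castSucc)..(x j.succ), ((u σ j).eval y) ^ 2) e (Set.Icc (0:ℝ) T) t) := by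
  classical
  have hUD : UniqueDiffOn ℝ (Set.Icc (0:ℝ) T) := uniqueDiffOn_Icc hT
  constructor
  · -- Part 1: conservation of ∫ w
    intro t ht
    have hdegw : ∀ σ ∈ Set.Icc (0:ℝ) T, FW.memV k (w σ) := fun σ hσ => (hdeg σ hσ).2.2.2.2.1
    have hdegw' : FW.memV k (w' t) := (hdeg t ht).2.2.2.2.2.1
    have hsum : HasDerivWithinAt
        (fun σ => ∑ j : Fin N, ∫ y in (x j.castSucc)..(x j.succ), (w σ j).eval y)
        (∑ j : Fin N, FWAux.cellInt (x j.castSucc) (x j.succ) (w' t j)) (Set.Icc (0:ℝ) T) t := by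
      refine HasDerivWithinAt.fun_sum fun j _ => ?_
      have h := FWAux.dlin (FWAux.cellInt (x j.castSucc) (x j.succ)) k (fun σ => w σ j) (w' t j)
        ht (fun σ hσ => hdegw σ hσ j) (hdegw' j) (fun m => hderw t ht j m)
      simpa [FWAux.cellInt_apply] using h
    have hone : (1 : Polynomial ℝ).degree ≤ (k : WithBot ℕ) :=
      le_trans Polynomial.degree_one_le (by exact_mod_cast Nat.zero_le k)
    have hval : (∑ j : Fin N, FWAux.cellInt (x j.castSucc) (x j.succ) (w' t j)) = 0 := by
      have hc1 : ∀ j : Fin N, FWAux.cellInt (x j.castSucc) (x j.succ) (w' t j)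
          = FW.ipj x (w' t) j 1 := by
        intro j; rw [FWAux.ipj_eq, mul_one]
      have h3 : ∀ j : Fin N, FW.ipj x (w' t) j 1
          = FW.bdj x (FW.trM x (ph t)) j 1 - FW.ipj x (s t) j 1 := by
        intro j
        have h := heq3 t ht j 1 hone
        rw [Polynomial.derivative_one] at h
        have h0 : FW.ipj x (ph t) j 0 = 0 := by simp [FW.ipj]
        linarith
      have h5 : ∀ j : Fin N, FW.ipj x (s t) j 1
          = FW.bdj x (fun i => FW.godunov (fun z => z ^ p / (p : ℝ)) (FW.trM x (u t) i)
              (FW.trP x (u t) i)) j 1 := by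
        intro j
        have h := heq5 t ht j 1 hone
        rw [Polynomial.derivative_one] at h
        have h0 : FW.ipfj x (fun z => z ^ p / (p : ℝ)) (u t) j 0 = 0 := by simp [FW.ipfj]
        linarith
      have htel : ∀ g : Fin N → ℝ, (∑ j, FW.bdj x g j 1) = 0 := by
        intro g
        have hb : ∀ j : Fin N, FW.bdj x g j 1 = g j - g (j - 1) := by
          intro j; simp [FW.bdj]
        rw [Finset.sum_congr rfl fun j _ => hb j]
        exact FWAux.sum_tel g
      calc (∑ j : Fin N, FWAux.cellInt (x j.castSucc) (x j.succ) (w' t j))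
          = ∑ j : Fin N, (FW.bdj x (FW.trM x (ph t)) j 1 - FW.ipj x (s t) j 1) := by
            refine Finset.sum_congr rfl fun j _ => ?_
            rw [hc1 j, h3 j]
        _ = (∑ j : Fin N, FW.bdj x (FW.trM x (ph t)) j 1) - ∑ j : Fin N, FW.ipj x (s t) j 1 :=
            Finset.sum_sub_distrib _ _
        _ = 0 := by
            rw [htel, Finset.sum_congr rfl fun j _ => h5 j, htel]
            ring
    exact hval ▸ hsum
  · -- Part 2: dissipation of ∫ u²
    intro t ht
    have hdegu : ∀ σ ∈ Set.Icc (0:ℝ) T, FW.memV k (u σ) := fun σ hσ => (hdeg σ hσ).1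
    have hdegu' : FW.memV k (u' t) := (hdeg t ht).2.1
    have hdegr : ∀ σ ∈ Set.Icc (0:ℝ) T, FW.memV k (r σ) := fun σ hσ => (hdeg σ hσ).2.2.1
    have hdegr' : FW.memV k (r' t) := (hdeg t ht).2.2.2.1
    have hdegw : ∀ σ ∈ Set.Icc (0:ℝ) T, FW.memV k (w σ) := fun σ hσ => (hdeg σ hσ).2.2.2.2.1
    have hdegw' : FW.memV k (w' t) := (hdeg t ht).2.2.2.2.2.1
    have hdegph : FW.memV k (ph t) := (hdeg t ht).2.2.2.2.2.2.1
    have hdegs : FW.memV k (s t) := (hdeg t ht).2.2.2.2.2.2.2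
    have du : ∀ (j : Fin N) (φ : Polynomial ℝ), HasDerivWithinAt
        (fun σ => FW.ipj x (u σ) j φ) (FW.ipj x (u' t) j φ) (Set.Icc (0:ℝ) T) t :=
      fun j φ => FWAux.dIpj x k ht u (u' t) hdegu hdegu' (hderu t ht) j φ
    have dr : ∀ (j : Fin N) (φ : Polynomial ℝ), HasDerivWithinAt
        (fun σ => FW.ipj x (r σ) j φ) (FW.ipj x (r' t) j φ) (Set.Icc (0:ℝ) T) t :=
      fun j φ => FWAux.dIpj x k ht r (r' t) hdegr hdegr' (hderr t ht) j φ
    have dw : ∀ (j : Fin N) (φ : Polynomial ℝ), HasDerivWithinAt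
        (fun σ => FW.ipj x (w σ) j φ) (FW.ipj x (w' t) j φ) (Set.Icc (0:ℝ) T) t :=
      fun j φ => FWAux.dIpj x k ht w (w' t) hdegw hdegw' (hderw t ht) j φ
    have deu : ∀ (i : Fin N) (pt : ℝ), HasDerivWithinAt
        (fun σ => (u σ i).eval pt) ((u' t i).eval pt) (Set.Icc (0:ℝ) T) t :=
      fun i pt => FWAux.dEval x k ht u (u' t) hdegu hdegu' (hderu t ht) i pt
    have der : ∀ (i : Fin N) (pt : ℝ), HasDerivWithinAt
        (fun σ => (r σ i).eval pt) ((r' t i).eval pt) (Set.Icc (0:ℝ) T) t :=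
      fun i pt => FWAux.dEval x k ht r (r' t) hdegr hdegr' (hderr t ht) i pt
    have heq1' : ∀ (j : Fin N) (φ : Polynomial ℝ), φ.degree ≤ (k : WithBot ℕ) →
        FW.ipj x (u' t) j φ - FW.bdj x (FW.trM x (r' t)) j φ
          + FW.ipj x (r' t) j (Polynomial.derivative φ) = FW.ipj x (w' t) j φ := by
      intro j φ hφ
      have hbd : HasDerivWithinAt (fun σ => FW.bdj x (FW.trM x (r σ)) j φ)
          (FW.bdj x (FW.trM x (r' t)) j φ) (Set.Icc (0:ℝ) T) t := by
        have h1 := (der j (x j.succ)).mul_const (φ.eval (x j.succ))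
        have h2 := (der (j-1) (x (j-1).succ)).mul_const (φ.eval (x j.castSucc))
        simpa [FW.bdj, FW.trM, Pi.sub_def] using h1.sub h2
      have hL := ((du j φ).sub hbd).add (dr j (Polynomial.derivative φ))
      exact FWAux.deriv_eq_of_eqOn hUD ht hL (dw j φ) (fun σ hσ => heq1 σ hσ j φ hφ)
    have heq2' : ∀ (j : Fin N) (φ : Polynomial ℝ), φ.degree ≤ (k : WithBot ℕ) →
        FW.ipj x (r' t) j φ - FW.bdj x (FW.trP x (u' t)) j φ
          + FW.ipj x (u' t) j (Polynomial.derivative φ) = 0 := by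
      intro j φ hφ
      have hbd : HasDerivWithinAt (fun σ => FW.bdj x (FW.trP x (u σ)) j φ)
          (FW.bdj x (FW.trP x (u' t)) j φ) (Set.Icc (0:ℝ) T) t := by
        have h1 := (deu (j+1) (x (j+1).castSucc)).mul_const (φ.eval (x j.succ))
        have h2 := (deu ((j-1)+1) (x ((j-1)+1).castSucc)).mul_const (φ.eval (x j.castSucc))
        simpa [FW.bdj, FW.trP, Pi.sub_def] using h1.sub h2
      have hL := ((dr j φ).sub hbd).add (du j (Polynomial.derivative φ))
      exact FWAux.deriv_eq_of_eqOn hUD ht hL (hasDerivWithinAt_const t _ (0:ℝ))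
        (fun σ hσ => heq2 σ hσ j φ hφ)
    have hS1' : ∀ φ : Fin N → Polynomial ℝ, FW.memV k φ →
        (∑ j, FW.ipj x (u' t) j (φ j)) - FW.Lm x (r' t) φ = ∑ j, FW.ipj x (w' t) j (φ j) := by
      intro φ hφ
      unfold FW.Lm
      rw [← Finset.sum_sub_distrib]
      refine Finset.sum_congr rfl fun j _ => ?_
      have := heq1' j (φ j) (hφ j)
      linarith
    have hS2' : ∀ φ : Fin N → Polynomial ℝ, FW.memV k φ →
        (∑ j, FW.ipj x (r' t) j (φ j)) = FW.Lp x (u' t) φ := by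
      intro φ hφ
      unfold FW.Lp
      refine Finset.sum_congr rfl fun j _ => ?_
      have := heq2' j (φ j) (hφ j)
      linarith
    have hS3 : ∀ φ : Fin N → Polynomial ℝ, FW.memV k φ →
        (∑ j, FW.ipj x (w' t) j (φ j)) + (∑ j, FW.ipj x (s t) j (φ j))
          = FW.Lm x (ph t) φ := by
      intro φ hφ
      unfold FW.Lm
      rw [← Finset.sum_add_distrib]
      refine Finset.sum_congr rfl fun j _ => ?_
      have := heq3 t ht j (φ j) (hφ j)
      linarith
    have hS4 : ∀ φ : Fin N → Polynomial ℝ, FW.memV k φ →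
        (∑ j, FW.ipj x (ph t) j (φ j)) = FW.Lp x (s t) φ - ∑ j, FW.ipj x (u t) j (φ j) := by
      intro φ hφ
      unfold FW.Lp
      rw [← Finset.sum_sub_distrib]
      refine Finset.sum_congr rfl fun j _ => ?_
      have := heq4 t ht j (φ j) (hφ j)
      linarith
    have hS5 : (∑ j, FW.ipj x (s t) j (u t j))
        = FW.Nd x (fun z => z ^ p / (p:ℝ)) (u t) (u t) := by
      unfold FW.Nd
      refine Finset.sum_congr rfl fun j _ => ?_
      have := heq5 t ht j (u t j) (hdegu t ht j)
      linarith
    have hkey := FWAux.key_ineq x hx (k := k) (p := p) (by omega) (u t) (u' t) (r' t) (w' t)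
      (ph t) (s t) (hdegu t ht) hdegu' hdegr' hdegs hdegph hS1' hS2' hS3 hS4 hS5
    refine ⟨2 * ∑ j, FW.ipj x (u' t) j (u t j), by linarith, ?_⟩
    have hsum : HasDerivWithinAt
        (fun σ => ∑ j : Fin N, ∫ y in (x j.castSucc)..(x j.succ), ((u σ j).eval y) ^ 2)
        (∑ j : Fin N, FWAux.cellInt (x j.castSucc) (x j.succ)
          (u' t j * u t j + u t j * u' t j)) (Set.Icc (0:ℝ) T) t := by
      refine HasDerivWithinAt.fun_sum fun j _ => ?_
      have hdg : ∀ σ ∈ Set.Icc (0:ℝ) T, (u σ j * u σ j).degree ≤ ((k+k:ℕ) : WithBot ℕ) :=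
        fun σ hσ => FWAux.degmul (hdegu σ hσ j) (hdegu σ hσ j)
      have hdg' : (u' t j * u t j + u t j * u' t j).degree ≤ ((k+k:ℕ) : WithBot ℕ) :=
        le_trans (Polynomial.degree_add_le _ _)
          (max_le (FWAux.degmul (hdegu' j) (hdegu t ht j))
            (FWAux.degmul (hdegu t ht j) (hdegu' j)))
      have hdm := fun m => FWAux.hasDerivWithinAt_coeff_mul (fun σ => u σ j) (fun σ => u σ j)
        (u' t j) (u' t j) (hderu t ht j) (hderu t ht j) m
      have h := FWAux.dlin (FWAux.cellInt (x j.castSucc) (x j.succ)) (k+k)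
        (fun σ => u σ j * u σ j) (u' t j * u t j + u t j * u' t j) ht hdg hdg' hdm
      have hcong : ∀ σ : ℝ, FWAux.cellInt (x j.castSucc) (x j.succ) (u σ j * u σ j)
          = ∫ y in (x j.castSucc)..(x j.succ), ((u σ j).eval y) ^ 2 := by
        intro σ
        rw [FWAux.cellInt_apply]
        refine intervalIntegral.integral_congr fun y _ => ?_
        simp [sq]
      exact h.congr (fun σ _ => (hcong σ).symm) (hcong t).symm
    have hval : (∑ j : Fin N, FWAux.cellInt (x j.castSucc) (x j.succ)
          (u' t j * u t j + u t j * u' t j)) = 2 * ∑ j, FW.ipj x (u' t) j (u t j) := by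
      rw [Finset.mul_sum]
      refine Finset.sum_congr rfl fun j _ => ?_
      rw [map_add, ← FWAux.ipj_eq, ← FWAux.ipj_eq, FWAux.ipj_symm x (u t) (u' t) j]
      ring
    exact hval ▸ hsum
end
end

section
/- Suppose (u_h, r_h, w_h, p_h, s_h) solves the conservative semi-discrete LDG Scheme C2 on [0,T]. Then for every t ∈ [0,T]: (d/dt) ∫_a^b w_h(t,x) dx = 0 (conservation of the quantity E₁) and (d/dt) ∫_a^b u_h(t,x)² dx = 0 (conservation of the energy E₂). -/
open Polynomial Set

noncomputable section

namespace AuxC2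
open FW



lemma eval_expand {k : ℕ} {P : Polynomial ℝ} (h : P.degree ≤ (k : WithBot ℕ)) (y : ℝ) :
    P.eval y = ∑ m ∈ Finset.range (k+1), P.coeff m * y ^ m :=
  Polynomial.eval_eq_sum_range' (Nat.lt_succ_of_le (natDegree_le_iff_degree_le.mpr h)) y

lemma integral_expand {k : ℕ} {P : Polynomial ℝ} (h : P.degree ≤ (k : WithBot ℕ))
    {g : ℝ → ℝ} (hg : Continuous g) (c d : ℝ) :
    (∫ y in c..d, P.eval y * g y)
      = ∑ m ∈ Finset.range (k+1), P.coeff m * ∫ y in c..d, y ^ m * g y := by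
  have h1 : ∀ y : ℝ, P.eval y * g y
      = ∑ m ∈ Finset.range (k+1), P.coeff m * (y ^ m * g y) := by
    intro y
    rw [eval_expand h, Finset.sum_mul]
    exact Finset.sum_congr rfl fun m _ => by ring
  rw [intervalIntegral.integral_congr (g := fun y => ∑ m ∈ Finset.range (k+1),
        P.coeff m * (y ^ m * g y)) (fun y _ => h1 y)]
  rw [intervalIntegral.integral_finset_sum (fun m _ =>
    (continuous_const.fun_mul ((continuous_pow m).fun_mul hg)).intervalIntegrable _ _)]
  exact Finset.sum_congr rfl fun m _ => intervalIntegral.integral_const_mul _ _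

lemma hasDerivWithinAt_eval {k : ℕ} {s : Set ℝ} {t : ℝ} (ht : t ∈ s)
    {U : ℝ → Polynomial ℝ} {U' : Polynomial ℝ}
    (hU : ∀ σ ∈ s, (U σ).degree ≤ (k : WithBot ℕ)) (hU' : U'.degree ≤ (k : WithBot ℕ))
    (hc : ∀ m, HasDerivWithinAt (fun σ => (U σ).coeff m) (U'.coeff m) s t) (y : ℝ) :
    HasDerivWithinAt (fun σ => (U σ).eval y) (U'.eval y) s t := by
  have h1 : HasDerivWithinAt (fun σ => ∑ m ∈ Finset.range (k+1), (U σ).coeff m * y ^ m)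
      (∑ m ∈ Finset.range (k+1), U'.coeff m * y ^ m) s t :=
    HasDerivWithinAt.fun_sum fun m _ => (hc m).mul_const _
  rw [← eval_expand hU' y] at h1
  exact h1.congr (fun σ hσ => eval_expand (hU σ hσ) y) (eval_expand (hU t ht) y)

lemma hasDerivWithinAt_integral {k : ℕ} {s : Set ℝ} {t : ℝ} (ht : t ∈ s)
    {U : ℝ → Polynomial ℝ} {U' : Polynomial ℝ}
    (hU : ∀ σ ∈ s, (U σ).degree ≤ (k : WithBot ℕ)) (hU' : U'.degree ≤ (k : WithBot ℕ))
    (hc : ∀ m, HasDerivWithinAt (fun σ => (U σ).coeff m) (U'.coeff m) s t)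
    {g : ℝ → ℝ} (hg : Continuous g) (c d : ℝ) :
    HasDerivWithinAt (fun σ => ∫ y in c..d, (U σ).eval y * g y)
      (∫ y in c..d, U'.eval y * g y) s t := by
  have h1 : HasDerivWithinAt
      (fun σ => ∑ m ∈ Finset.range (k+1), (U σ).coeff m * ∫ y in c..d, y ^ m * g y)
      (∑ m ∈ Finset.range (k+1), U'.coeff m * ∫ y in c..d, y ^ m * g y) s t :=
    HasDerivWithinAt.fun_sum fun m _ => (hc m).mul_const _
  rw [← integral_expand hU' hg c d] at h1
  exact h1.congr (fun σ hσ => integral_expand (hU σ hσ) hg c d)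
    (integral_expand (hU t ht) hg c d)

lemma integral_expand2 {k : ℕ} {P Q : Polynomial ℝ} (hP : P.degree ≤ (k : WithBot ℕ))
    (hQ : Q.degree ≤ (k : WithBot ℕ)) (c d : ℝ) :
    (∫ y in c..d, P.eval y * Q.eval y)
      = ∑ m ∈ Finset.range (k+1), ∑ n ∈ Finset.range (k+1),
          P.coeff m * Q.coeff n * ∫ y in c..d, y ^ (m+n) := by
  have h1 : ∀ y : ℝ, P.eval y * Q.eval y
      = ∑ m ∈ Finset.range (k+1), ∑ n ∈ Finset.range (k+1),
          P.coeff m * Q.coeff n * y ^ (m+n) := by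
    intro y
    rw [eval_expand hP, eval_expand hQ, Finset.sum_mul_sum]
    exact Finset.sum_congr rfl fun m _ => Finset.sum_congr rfl fun n _ => by
      rw [pow_add]; ring
  rw [intervalIntegral.integral_congr (g := fun y => ∑ m ∈ Finset.range (k+1),
        ∑ n ∈ Finset.range (k+1), P.coeff m * Q.coeff n * y ^ (m+n)) (fun y _ => h1 y)]
  rw [intervalIntegral.integral_finset_sum (fun m _ => (Continuous.intervalIntegrable (by
    exact continuous_finset_sum _ fun n _ => continuous_const.mul (continuous_pow (m+n))) _ _))]
  exact Finset.sum_congr rfl fun m _ => by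
    rw [intervalIntegral.integral_finset_sum (fun n _ =>
      (continuous_const.fun_mul (continuous_pow (m+n))).intervalIntegrable _ _)]
    exact Finset.sum_congr rfl fun n _ => intervalIntegral.integral_const_mul _ _

lemma hasDerivWithinAt_integral_sq {k : ℕ} {s : Set ℝ} {t : ℝ} (ht : t ∈ s)
    {U : ℝ → Polynomial ℝ} {U' : Polynomial ℝ}
    (hU : ∀ σ ∈ s, (U σ).degree ≤ (k : WithBot ℕ)) (hU' : U'.degree ≤ (k : WithBot ℕ))
    (hc : ∀ m, HasDerivWithinAt (fun σ => (U σ).coeff m) (U'.coeff m) s t) (c d : ℝ) :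
    HasDerivWithinAt (fun σ => ∫ y in c..d, (U σ).eval y ^ 2)
      ((∫ y in c..d, U'.eval y * (U t).eval y)
        + ∫ y in c..d, (U t).eval y * U'.eval y) s t := by
  have h1 : HasDerivWithinAt
      (fun σ => ∑ m ∈ Finset.range (k+1), ∑ n ∈ Finset.range (k+1),
          (U σ).coeff m * (U σ).coeff n * ∫ y in c..d, y ^ (m+n))
      (∑ m ∈ Finset.range (k+1), ∑ n ∈ Finset.range (k+1),
          (U'.coeff m * (U t).coeff n + (U t).coeff m * U'.coeff n) * ∫ y in c..d, y ^ (m+n))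
      s t :=
    HasDerivWithinAt.fun_sum fun m _ => HasDerivWithinAt.fun_sum fun n _ =>
      ((hc m).fun_mul (hc n)).mul_const _
  have h2 : (∑ m ∈ Finset.range (k+1), ∑ n ∈ Finset.range (k+1),
      (U'.coeff m * (U t).coeff n + (U t).coeff m * U'.coeff n) * ∫ y in c..d, y ^ (m+n))
      = (∫ y in c..d, U'.eval y * (U t).eval y)
        + ∫ y in c..d, (U t).eval y * U'.eval y := by
    rw [integral_expand2 hU' (hU t ht) c d, integral_expand2 (hU t ht) hU' c d,
      ← Finset.sum_add_distrib]
    refine Finset.sum_congr rfl fun m _ => ?_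
    rw [← Finset.sum_add_distrib]
    exact Finset.sum_congr rfl fun n _ => by ring
  rw [h2] at h1
  have h3 : ∀ (Q : Polynomial ℝ), Q.degree ≤ (k : WithBot ℕ) →
      (∫ y in c..d, Q.eval y ^ 2) = ∑ m ∈ Finset.range (k+1), ∑ n ∈ Finset.range (k+1),
          Q.coeff m * Q.coeff n * ∫ y in c..d, y ^ (m+n) := by
    intro Q hQdeg
    rw [← integral_expand2 hQdeg hQdeg c d]
    exact intervalIntegral.integral_congr fun y _ => by ring
  exact h1.congr (fun σ hσ => h3 _ (hU σ hσ)) (h3 _ (hU t ht))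

lemma integral_deriv_poly (P : Polynomial ℝ) (c d : ℝ) :
    (∫ y in c..d, (derivative P).eval y) = P.eval d - P.eval c :=
  intervalIntegral.integral_eq_sub_of_hasDerivAt (fun y _ => P.hasDerivAt y)
    ((derivative P).continuous.intervalIntegrable _ _)

lemma integral_prod_deriv (a b : Polynomial ℝ) (c d : ℝ) :
    ((∫ y in c..d, a.eval y * (derivative b).eval y)
      + ∫ y in c..d, b.eval y * (derivative a).eval y)
    = a.eval d * b.eval d - a.eval c * b.eval c := by
  have key : (∫ y in c..d, (a.eval y * (derivative b).eval y
      + b.eval y * (derivative a).eval y)) = (a*b).eval d - (a*b).eval c := by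
    rw [← integral_deriv_poly (a*b) c d]
    exact intervalIntegral.integral_congr fun y _ => by
      simp [derivative_mul, eval_add, eval_mul]; ring
  rw [← intervalIntegral.integral_add
    ((a.continuous.fun_mul (derivative b).continuous).intervalIntegrable _ _)
    ((b.continuous.fun_mul (derivative a).continuous).intervalIntegrable _ _), key]
  simp [eval_mul]

lemma integral_flux (p : ℕ) (hp : 1 ≤ p) (P : Polynomial ℝ) (c d : ℝ) :
    (∫ y in c..d, P.eval y ^ p / (p:ℝ) * (derivative P).eval y)
    = P.eval d ^ (p+1) / ((p:ℝ) * ((p:ℝ)+1)) - P.eval c ^ (p+1) / ((p:ℝ) * ((p:ℝ)+1)) := by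
  have hp0 : (p:ℝ) ≠ 0 := Nat.cast_ne_zero.mpr (by omega)
  have hp1 : (p:ℝ) + 1 ≠ 0 := by positivity
  apply intervalIntegral.integral_eq_sub_of_hasDerivAt
    (f := fun y => P.eval y ^ (p+1) / ((p:ℝ) * ((p:ℝ)+1)))
  · intro y _
    have h := ((P.hasDerivAt y).pow (p+1)).div_const ((p:ℝ) * ((p:ℝ)+1))
    have e : (↑(p+1) * P.eval y ^ (p+1-1) * (derivative P).eval y) / ((p:ℝ) * ((p:ℝ)+1))
        = P.eval y ^ p / (p:ℝ) * (derivative P).eval y := by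
      rw [Nat.add_sub_cancel]
      push_cast
      field_simp
    exact e ▸ h
  · exact (((P.continuous.pow p).div_const _).mul (derivative P).continuous).intervalIntegrable _ _





variable {N : ℕ} [NeZero N]

lemma sum_shift (g : Fin N → ℝ) : ∑ j, g (j - 1) = ∑ j, g j :=
  Fintype.sum_equiv (Equiv.subRight (1:Fin N)) _ _ (fun _ => rfl)

lemma sum_telescope (g : Fin N → ℝ) : ∑ j, (g (j-1) - g j) = 0 := by
  rw [Finset.sum_sub_distrib, sum_shift]
  exact sub_self _

lemma sum_telescope' (g : Fin N → ℝ) : ∑ j, (g j - g (j-1)) = 0 := by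
  rw [Finset.sum_sub_distrib, sum_shift]
  exact sub_self _

lemma trP_sub_one (x : Fin (N + 1) → ℝ) (ω : Fin N → Polynomial ℝ) (j : Fin N) :
    trP x ω (j-1) = (ω j).eval (x j.castSucc) := by
  unfold FW.trP
  rw [sub_add_cancel]

lemma ipj_comm (x : Fin (N + 1) → ℝ) (a b : Fin N → Polynomial ℝ) (j : Fin N) :
    ipj x a j (b j) = ipj x b j (a j) :=
  intervalIntegral.integral_congr fun y _ => mul_comm _ _

lemma ipj_prod_deriv (x : Fin (N + 1) → ℝ) (a b : Fin N → Polynomial ℝ) (j : Fin N) :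
    ipj x a j (derivative (b j)) + ipj x b j (derivative (a j))
      = trM x a j * trM x b j - trP x a (j-1) * trP x b (j-1) := by
  unfold FW.ipj
  rw [integral_prod_deriv (a j) (b j)]
  rw [trP_sub_one, trP_sub_one]
  rfl

lemma Lc_antisymm (x : Fin (N + 1) → ℝ) (a b : Fin N → Polynomial ℝ) :
    Lc x a b + Lc x b a = 0 := by
  unfold FW.Lc
  rw [← Finset.sum_add_distrib]
  have key : ∀ j : Fin N,
      ((-(ipj x a j (derivative (b j))) + bdj x (trA x a) j (b j))
        + (-(ipj x b j (derivative (a j))) + bdj x (trA x b) j (a j)))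
      = ((trP x a (j-1) * trP x b (j-1) - trA x a (j-1) * trP x b (j-1)
            - trA x b (j-1) * trP x a (j-1))
        - (trP x a j * trP x b j - trA x a j * trP x b j - trA x b j * trP x a j)) := by
    intro j
    have hip := ipj_prod_deriv x a b j
    have e1 : (b j).eval (x j.castSucc) = trP x b (j-1) := (trP_sub_one x b j).symm
    have e2 : (a j).eval (x j.castSucc) = trP x a (j-1) := (trP_sub_one x a j).symm
    have e3 : (b j).eval (x j.succ) = trM x b j := rfl
    have e4 : (a j).eval (x j.succ) = trM x a j := rfl
    unfold FW.bdj
    rw [e1, e2, e3, e4]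
    simp only [FW.trA]
    linear_combination -hip
  rw [Finset.sum_congr rfl fun j _ => key j]
  exact sum_telescope (fun j => trP x a j * trP x b j - trA x a j * trP x b j
    - trA x b j * trP x a j)

lemma Lc_self (x : Fin (N + 1) → ℝ) (a : Fin N → Polynomial ℝ) : Lc x a a = 0 := by
  have := Lc_antisymm x a a
  linarith

lemma consFlux_key (p : ℕ) (c d : ℝ) :
    consFlux p c d * d - d ^ (p+1) / ((p:ℝ) * ((p:ℝ)+1))
      = consFlux p c d * c - c ^ (p+1) / ((p:ℝ) * ((p:ℝ)+1)) := by
  unfold FW.consFlux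
  by_cases h : c = d
  · simp [h]
  · rw [if_neg h]
    have hdc : d - c ≠ 0 := sub_ne_zero.mpr (Ne.symm h)
    field_simp
    ring

lemma flux_sum_zero (x : Fin (N + 1) → ℝ) (p : ℕ) (hp : 1 ≤ p) (u : Fin N → Polynomial ℝ) :
    ∑ j, (bdj x (fun i => consFlux p (trM x u i) (trP x u i)) j (u j)
      - ipfj x (fun w => w ^ p / (p:ℝ)) u j (derivative (u j))) = 0 := by
  have key : ∀ j : Fin N,
      (bdj x (fun i => consFlux p (trM x u i) (trP x u i)) j (u j)
        - ipfj x (fun w => w ^ p / (p:ℝ)) u j (derivative (u j)))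
      = ((consFlux p (trM x u j) (trP x u j) * trP x u j
            - trP x u j ^ (p+1) / ((p:ℝ) * ((p:ℝ)+1)))
        - (consFlux p (trM x u (j-1)) (trP x u (j-1)) * trP x u (j-1)
            - trP x u (j-1) ^ (p+1) / ((p:ℝ) * ((p:ℝ)+1)))) := by
    intro j
    have hint : ipfj x (fun w => w ^ p / (p:ℝ)) u j (derivative (u j))
        = trM x u j ^ (p+1) / ((p:ℝ) * ((p:ℝ)+1))
          - trP x u (j-1) ^ (p+1) / ((p:ℝ) * ((p:ℝ)+1)) := by
      unfold FW.ipfj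
      rw [integral_flux p hp (u j)]
      rw [trP_sub_one]
      rfl
    have hk1 := consFlux_key p (trM x u j) (trP x u j)
    unfold FW.bdj
    have e1 : (u j).eval (x j.castSucc) = trP x u (j-1) := (trP_sub_one x u j).symm
    have e2 : (u j).eval (x j.succ) = trM x u j := rfl
    rw [e1, e2, hint]
    linear_combination -hk1
  rw [Finset.sum_congr rfl fun j _ => key j]
  exact sum_telescope' (fun j => consFlux p (trM x u j) (trP x u j) * trP x u j
    - trP x u j ^ (p+1) / ((p:ℝ) * ((p:ℝ)+1)))


end AuxC2

namespace AuxC2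
open FW

lemma hasDeriv_ipj {N k : ℕ} [NeZero N] {s : Set ℝ} {t : ℝ} (ht : t ∈ s)
    (x : Fin (N + 1) → ℝ) {R : ℝ → Fin N → Polynomial ℝ} {R' : Fin N → Polynomial ℝ}
    (hR : ∀ σ ∈ s, memV k (R σ)) (hR' : memV k R')
    (hc : ∀ (j : Fin N) (m : ℕ),
      HasDerivWithinAt (fun σ => (R σ j).coeff m) ((R' j).coeff m) s t)
    (j : Fin N) (φ : Polynomial ℝ) :
    HasDerivWithinAt (fun σ => ipj x (R σ) j φ) (ipj x R' j φ) s t :=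
  hasDerivWithinAt_integral ht (U := fun σ => R σ j) (fun σ hσ => hR σ hσ j) (hR' j)
    (hc j) φ.continuous (x j.castSucc) (x j.succ)

lemma hasDeriv_bdj {N k : ℕ} [NeZero N] {s : Set ℝ} {t : ℝ} (ht : t ∈ s)
    (x : Fin (N + 1) → ℝ) {R : ℝ → Fin N → Polynomial ℝ} {R' : Fin N → Polynomial ℝ}
    (hR : ∀ σ ∈ s, memV k (R σ)) (hR' : memV k R')
    (hc : ∀ (j : Fin N) (m : ℕ),
      HasDerivWithinAt (fun σ => (R σ j).coeff m) ((R' j).coeff m) s t)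
    (j : Fin N) (φ : Polynomial ℝ) :
    HasDerivWithinAt (fun σ => bdj x (trA x (R σ)) j φ) (bdj x (trA x R') j φ) s t := by
  have hev : ∀ (i : Fin N) (y : ℝ),
      HasDerivWithinAt (fun σ => (R σ i).eval y) ((R' i).eval y) s t :=
    fun i y => hasDerivWithinAt_eval ht (fun σ hσ => hR σ hσ i) (hR' i) (hc i) y
  simp only [FW.bdj, FW.trA, FW.trP, FW.trM]
  exact ((((hev _ _).add (hev _ _)).div_const 2).mul_const _).sub
    ((((hev _ _).add (hev _ _)).div_const 2).mul_const _)

end AuxC2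

theorem stmt16 {N : ℕ} [NeZero N] (hN : 1 ≤ N) (a b : ℝ) (hab : a < b)
    (x : Fin (N + 1) → ℝ) (hx : StrictMono x) (hxa : x 0 = a) (hxb : x (Fin.last N) = b)
    (k : ℕ) (p : ℕ) (hp : 2 ≤ p) (T : ℝ) (hT : 0 < T)
    (u u' r r' w w' ph s : ℝ → Fin N → Polynomial ℝ)
    (hdeg : ∀ t ∈ Set.Icc (0:ℝ) T,
      FW.memV k (u t) ∧ FW.memV k (u' t) ∧ FW.memV k (r t) ∧ FW.memV k (r' t)
        ∧ FW.memV k (w t) ∧ FW.memV k (w' t) ∧ FW.memV k (ph t) ∧ FW.memV k (s t))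
    (hderu : ∀ t ∈ Set.Icc (0:ℝ) T, ∀ (j : Fin N) (m : ℕ),
      HasDerivWithinAt (fun σ => (u σ j).coeff m) ((u' t j).coeff m) (Set.Icc (0:ℝ) T) t)
    (hderr : ∀ t ∈ Set.Icc (0:ℝ) T, ∀ (j : Fin N) (m : ℕ),
      HasDerivWithinAt (fun σ => (r σ j).coeff m) ((r' t j).coeff m) (Set.Icc (0:ℝ) T) t)
    (hderw : ∀ t ∈ Set.Icc (0:ℝ) T, ∀ (j : Fin N) (m : ℕ),
      HasDerivWithinAt (fun σ => (w σ j).coeff m) ((w' t j).coeff m) (Set.Icc (0:ℝ) T) t)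
    (heq1 : ∀ t ∈ Set.Icc (0:ℝ) T, ∀ (j : Fin N), ∀ φ : Polynomial ℝ,
      φ.degree ≤ (k : WithBot ℕ) →
      FW.ipj x (u t) j φ - FW.bdj x (FW.trA x (r t)) j φ
          + FW.ipj x (r t) j (Polynomial.derivative φ)
        = FW.ipj x (w t) j φ)
    (heq2 : ∀ t ∈ Set.Icc (0:ℝ) T, ∀ (j : Fin N), ∀ φ : Polynomial ℝ,
      φ.degree ≤ (k : WithBot ℕ) →
      FW.ipj x (r t) j φ - FW.bdj x (FW.trA x (u t)) j φ
          + FW.ipj x (u t) j (Polynomial.derivative φ) = 0)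
    (heq3 : ∀ t ∈ Set.Icc (0:ℝ) T, ∀ (j : Fin N), ∀ φ : Polynomial ℝ,
      φ.degree ≤ (k : WithBot ℕ) →
      FW.ipj x (w' t) j φ + FW.ipj x (s t) j φ
        = FW.bdj x (FW.trA x (ph t)) j φ
          - FW.ipj x (ph t) j (Polynomial.derivative φ))
    (heq4 : ∀ t ∈ Set.Icc (0:ℝ) T, ∀ (j : Fin N), ∀ φ : Polynomial ℝ,
      φ.degree ≤ (k : WithBot ℕ) →
      FW.ipj x (ph t) j φ
        = FW.bdj x (FW.trA x (s t)) j φ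
          - FW.ipj x (s t) j (Polynomial.derivative φ) - FW.ipj x (u t) j φ)
    (heq5 : ∀ t ∈ Set.Icc (0:ℝ) T, ∀ (j : Fin N), ∀ φ : Polynomial ℝ,
      φ.degree ≤ (k : WithBot ℕ) →
      FW.ipj x (s t) j φ
        = FW.bdj x (fun i => FW.consFlux p (FW.trM x (u t) i) (FW.trP x (u t) i)) j φ
          - FW.ipfj x (fun w => w ^ p / (p : ℝ)) (u t) j (Polynomial.derivative φ)) :
    (∀ t ∈ Set.Icc (0:ℝ) T,
      HasDerivWithinAt (fun σ => ∑ j : Fin N, ∫ y in (x j.castSucc)..(x j.succ), (w σ j).eval y) 0 (Set.Icc (0:ℝ) T) t)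
    ∧ (∀ t ∈ Set.Icc (0:ℝ) T,
      HasDerivWithinAt (fun σ => ∑ j : Fin N, ∫ y in (x j.castSucc)..(x j.succ), ((u σ j).eval y) ^ 2) 0 (Set.Icc (0:ℝ) T) t) := by

  have hone : (1 : Polynomial ℝ).degree ≤ (k : WithBot ℕ) :=
    le_trans Polynomial.degree_one_le (by exact_mod_cast Nat.zero_le k)
  constructor
  · -- conservation of E₁
    intro t ht
    have hsum0 : ∑ j : Fin N, FW.ipj x (w' t) j 1 = 0 := by
      have hbd : ∑ j : Fin N, FW.bdj x (FW.trA x (ph t)) j 1 = 0 := by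
        simp only [FW.bdj, Polynomial.eval_one, mul_one]
        exact AuxC2.sum_telescope' _
      have hs1 : ∑ j : Fin N, FW.ipj x (s t) j 1 = 0 := by
        have hbd2 : ∑ j : Fin N, FW.bdj x
            (fun i => FW.consFlux p (FW.trM x (u t) i) (FW.trP x (u t) i)) j 1 = 0 := by
          simp only [FW.bdj, Polynomial.eval_one, mul_one]
          exact AuxC2.sum_telescope' _
        have h5 : ∑ j : Fin N, FW.ipj x (s t) j 1
            = ∑ j : Fin N, (FW.bdj x
              (fun i => FW.consFlux p (FW.trM x (u t) i) (FW.trP x (u t) i)) j 1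
              - FW.ipfj x (fun w => w ^ p / (p : ℝ)) (u t) j (Polynomial.derivative 1)) :=
          Finset.sum_congr rfl fun j _ => heq5 t ht j 1 hone
        have hzero : ∀ j : Fin N,
            FW.ipfj x (fun w => w ^ p / (p : ℝ)) (u t) j (Polynomial.derivative 1) = 0 := by
          intro j
          simp [FW.ipfj, Polynomial.derivative_one]
        rw [h5, Finset.sum_sub_distrib, hbd2]
        have hzero' : ∀ j : Fin N,
            FW.ipfj x (fun w => w ^ p / (p : ℝ)) (u t) j 0 = 0 := by
          intro j
          simp [FW.ipfj]
        simp [hzero']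
      have h3 : ∑ j : Fin N, (FW.ipj x (w' t) j 1 + FW.ipj x (s t) j 1)
          = ∑ j : Fin N, (FW.bdj x (FW.trA x (ph t)) j 1
              - FW.ipj x (ph t) j (Polynomial.derivative 1)) :=
        Finset.sum_congr rfl fun j _ => heq3 t ht j 1 hone
      have hpz : ∀ j : Fin N, FW.ipj x (ph t) j (Polynomial.derivative 1) = 0 := by
        intro j
        simp [FW.ipj, Polynomial.derivative_one]
      rw [Finset.sum_add_distrib, Finset.sum_sub_distrib, hbd, hs1] at h3
      simp only [hpz, Finset.sum_const_zero] at h3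
      linarith
    have hD : HasDerivWithinAt
        (fun σ => ∑ j : Fin N, ∫ y in (x j.castSucc)..(x j.succ),
          (w σ j).eval y * (1 : Polynomial ℝ).eval y)
        (∑ j : Fin N, FW.ipj x (w' t) j 1) (Set.Icc (0:ℝ) T) t := by
      apply HasDerivWithinAt.fun_sum
      intro j _
      exact AuxC2.hasDerivWithinAt_integral ht (fun σ hσ => (hdeg σ hσ).2.2.2.2.1 j)
        ((hdeg t ht).2.2.2.2.2.1 j) (hderw t ht j) (1 : Polynomial ℝ).continuous _ _
    rw [hsum0] at hD
    exact hD.congr (fun σ _ => by simp) (by simp)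
  · -- conservation of E₂
    intro t ht
    obtain ⟨mU, mU', mR, mR', mW, mW', mP, mS⟩ := hdeg t ht
    have hp1 : 1 ≤ p := by omega
    -- summed scheme identities
    have key3 : ∀ ψ : Fin N → Polynomial ℝ, FW.memV k ψ →
        (∑ j : Fin N, FW.ipj x (w' t) j (ψ j)) + (∑ j : Fin N, FW.ipj x (s t) j (ψ j))
          = FW.Lc x (ph t) ψ := by
      intro ψ hψ
      rw [FW.Lc, ← Finset.sum_add_distrib]
      exact Finset.sum_congr rfl fun j _ => by
        have := heq3 t ht j (ψ j) (hψ j); linarith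
    have key4 : ∀ ψ : Fin N → Polynomial ℝ, FW.memV k ψ →
        (∑ j : Fin N, FW.ipj x (ph t) j (ψ j))
          = FW.Lc x (s t) ψ - ∑ j : Fin N, FW.ipj x (u t) j (ψ j) := by
      intro ψ hψ
      rw [FW.Lc, ← Finset.sum_sub_distrib]
      exact Finset.sum_congr rfl fun j _ => by
        have := heq4 t ht j (ψ j) (hψ j); linarith
    -- differentiated scheme identities
    have key1' : ∀ ψ : Fin N → Polynomial ℝ, FW.memV k ψ →
        (∑ j : Fin N, FW.ipj x (u' t) j (ψ j)) - FW.Lc x (r' t) ψ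
          = ∑ j : Fin N, FW.ipj x (w' t) j (ψ j) := by
      intro ψ hψ
      have hDf : HasDerivWithinAt
          (fun σ => ∑ j : Fin N, (FW.ipj x (u σ) j (ψ j) - FW.bdj x (FW.trA x (r σ)) j (ψ j)
            + FW.ipj x (r σ) j (Polynomial.derivative (ψ j)) - FW.ipj x (w σ) j (ψ j)))
          (∑ j : Fin N, (FW.ipj x (u' t) j (ψ j) - FW.bdj x (FW.trA x (r' t)) j (ψ j)
            + FW.ipj x (r' t) j (Polynomial.derivative (ψ j)) - FW.ipj x (w' t) j (ψ j)))
          (Set.Icc (0:ℝ) T) t := by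
        apply HasDerivWithinAt.fun_sum
        intro j _
        exact (((AuxC2.hasDeriv_ipj ht x (fun σ hσ => (hdeg σ hσ).1) mU' (hderu t ht) j (ψ j)).sub
          (AuxC2.hasDeriv_bdj ht x (fun σ hσ => (hdeg σ hσ).2.2.1) mR' (hderr t ht) j (ψ j))).add
          (AuxC2.hasDeriv_ipj ht x (fun σ hσ => (hdeg σ hσ).2.2.1) mR' (hderr t ht) j
            (Polynomial.derivative (ψ j)))).sub
          (AuxC2.hasDeriv_ipj ht x (fun σ hσ => (hdeg σ hσ).2.2.2.2.1) mW' (hderw t ht) j (ψ j))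
      have hzero : ∀ σ ∈ Set.Icc (0:ℝ) T,
          (∑ j : Fin N, (FW.ipj x (u σ) j (ψ j) - FW.bdj x (FW.trA x (r σ)) j (ψ j)
            + FW.ipj x (r σ) j (Polynomial.derivative (ψ j)) - FW.ipj x (w σ) j (ψ j))) = 0 :=
        fun σ hσ => Finset.sum_eq_zero fun j _ => by
          have := heq1 σ hσ j (ψ j) (hψ j); linarith
      have hD0 : HasDerivWithinAt
          (fun σ => ∑ j : Fin N, (FW.ipj x (u σ) j (ψ j) - FW.bdj x (FW.trA x (r σ)) j (ψ j)
            + FW.ipj x (r σ) j (Polynomial.derivative (ψ j)) - FW.ipj x (w σ) j (ψ j)))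
          0 (Set.Icc (0:ℝ) T) t :=
        (hasDerivWithinAt_const t _ (0:ℝ)).congr (fun σ hσ => hzero σ hσ) (hzero t ht)
      have hval := UniqueDiffWithinAt.eq_deriv _ (uniqueDiffOn_Icc hT t ht) hDf hD0
      rw [Finset.sum_sub_distrib, Finset.sum_add_distrib, Finset.sum_sub_distrib] at hval
      rw [FW.Lc, Finset.sum_add_distrib, Finset.sum_neg_distrib]
      linarith
    have key2' : ∀ ψ : Fin N → Polynomial ℝ, FW.memV k ψ →
        (∑ j : Fin N, FW.ipj x (r' t) j (ψ j)) = FW.Lc x (u' t) ψ := by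
      intro ψ hψ
      have hDf : HasDerivWithinAt
          (fun σ => ∑ j : Fin N, (FW.ipj x (r σ) j (ψ j) - FW.bdj x (FW.trA x (u σ)) j (ψ j)
            + FW.ipj x (u σ) j (Polynomial.derivative (ψ j))))
          (∑ j : Fin N, (FW.ipj x (r' t) j (ψ j) - FW.bdj x (FW.trA x (u' t)) j (ψ j)
            + FW.ipj x (u' t) j (Polynomial.derivative (ψ j))))
          (Set.Icc (0:ℝ) T) t := by
        apply HasDerivWithinAt.fun_sum
        intro j _
        exact ((AuxC2.hasDeriv_ipj ht x (fun σ hσ => (hdeg σ hσ).2.2.1) mR' (hderr t ht) j (ψ j)).sub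
          (AuxC2.hasDeriv_bdj ht x (fun σ hσ => (hdeg σ hσ).1) mU' (hderu t ht) j (ψ j))).add
          (AuxC2.hasDeriv_ipj ht x (fun σ hσ => (hdeg σ hσ).1) mU' (hderu t ht) j
            (Polynomial.derivative (ψ j)))
      have hzero : ∀ σ ∈ Set.Icc (0:ℝ) T,
          (∑ j : Fin N, (FW.ipj x (r σ) j (ψ j) - FW.bdj x (FW.trA x (u σ)) j (ψ j)
            + FW.ipj x (u σ) j (Polynomial.derivative (ψ j)))) = 0 :=
        fun σ hσ => Finset.sum_eq_zero fun j _ => heq2 σ hσ j (ψ j) (hψ j)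
      have hD0 : HasDerivWithinAt
          (fun σ => ∑ j : Fin N, (FW.ipj x (r σ) j (ψ j) - FW.bdj x (FW.trA x (u σ)) j (ψ j)
            + FW.ipj x (u σ) j (Polynomial.derivative (ψ j))))
          0 (Set.Icc (0:ℝ) T) t :=
        (hasDerivWithinAt_const t _ (0:ℝ)).congr (fun σ hσ => hzero σ hσ) (hzero t ht)
      have hval := UniqueDiffWithinAt.eq_deriv _ (uniqueDiffOn_Icc hT t ht) hDf hD0
      rw [Finset.sum_add_distrib, Finset.sum_sub_distrib] at hval
      rw [FW.Lc, Finset.sum_add_distrib, Finset.sum_neg_distrib]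
      linarith
    -- symmetry of the pairing
    have sym : ∀ a b : Fin N → Polynomial ℝ,
        ∑ j : Fin N, FW.ipj x a j (b j) = ∑ j : Fin N, FW.ipj x b j (a j) :=
      fun a b => Finset.sum_congr rfl fun j _ => AuxC2.ipj_comm x a b j
    -- the algebraic chain
    have hsu : ∑ j : Fin N, FW.ipj x (s t) j (u t j) = 0 := by
      have h5 : ∑ j : Fin N, FW.ipj x (s t) j (u t j)
          = ∑ j : Fin N, (FW.bdj x
              (fun i => FW.consFlux p (FW.trM x (u t) i) (FW.trP x (u t) i)) j (u t j)
            - FW.ipfj x (fun w => w ^ p / (p : ℝ)) (u t) j (Polynomial.derivative (u t j))) :=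
          Finset.sum_congr rfl fun j _ => heq5 t ht j (u t j) (mU j)
      rw [h5]
      exact AuxC2.flux_sum_zero x p hp1 (u t)
    have hus : ∑ j : Fin N, FW.ipj x (u t) j (s t j) = 0 := (sym (u t) (s t)).trans hsu
    have hps : ∑ j : Fin N, FW.ipj x (ph t) j (s t j) = 0 := by
      have h4 := key4 (s t) mS
      rw [AuxC2.Lc_self, hus] at h4
      linarith
    have hsp : ∑ j : Fin N, FW.ipj x (s t) j (ph t j) = 0 := (sym (s t) (ph t)).trans hps
    have hr'u' : ∑ j : Fin N, FW.ipj x (r' t) j (u' t j) = 0 := by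
      have h2 := key2' (u' t) mU'
      rw [AuxC2.Lc_self] at h2
      exact h2
    have hu'r' : ∑ j : Fin N, FW.ipj x (u' t) j (r' t j) = 0 :=
      (sym (u' t) (r' t)).trans hr'u'
    have hw'r' : ∑ j : Fin N, FW.ipj x (w' t) j (r' t j) = 0 := by
      have h1 := key1' (r' t) mR'
      rw [AuxC2.Lc_self] at h1
      linarith [hu'r']
    have hw'p : ∑ j : Fin N, FW.ipj x (w' t) j (ph t j) = 0 := by
      have h3 := key3 (ph t) mP
      rw [AuxC2.Lc_self] at h3
      linarith [hsp]
    have hLr'p : FW.Lc x (r' t) (ph t) = -(∑ j : Fin N, FW.ipj x (s t) j (r' t j)) := by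
      have h3 := key3 (r' t) mR'
      have ha := AuxC2.Lc_antisymm x (r' t) (ph t)
      linarith [hw'r']
    have hu'p : ∑ j : Fin N, FW.ipj x (u' t) j (ph t j)
        = -(∑ j : Fin N, FW.ipj x (s t) j (r' t j)) := by
      have h1 := key1' (ph t) mP
      linarith [hw'p, hLr'p]
    have h4' := key4 (u' t) mU'
    have hLsu' : FW.Lc x (s t) (u' t) = -(∑ j : Fin N, FW.ipj x (r' t) j (s t j)) := by
      have h2 := key2' (s t) mS
      have ha := AuxC2.Lc_antisymm x (s t) (u' t)
      linarith
    have hfin : ∑ j : Fin N, FW.ipj x (u t) j (u' t j) = 0 := by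
      have e1 : ∑ j : Fin N, FW.ipj x (ph t) j (u' t j)
          = ∑ j : Fin N, FW.ipj x (u' t) j (ph t j) := sym _ _
      have e2 : ∑ j : Fin N, FW.ipj x (r' t) j (s t j)
          = ∑ j : Fin N, FW.ipj x (s t) j (r' t j) := sym _ _
      linarith [h4', hu'p, hLsu', e1, e2]
    -- assemble the derivative
    have hD : HasDerivWithinAt
        (fun σ => ∑ j : Fin N, ∫ y in (x j.castSucc)..(x j.succ), ((u σ j).eval y) ^ 2)
        (∑ j : Fin N, (FW.ipj x (u' t) j (u t j) + FW.ipj x (u t) j (u' t j)))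
        (Set.Icc (0:ℝ) T) t := by
      apply HasDerivWithinAt.fun_sum
      intro j _
      exact AuxC2.hasDerivWithinAt_integral_sq ht (fun σ hσ => (hdeg σ hσ).1 j) (mU' j)
        (hderu t ht j) (x j.castSucc) (x j.succ)
    have hval : (∑ j : Fin N, (FW.ipj x (u' t) j (u t j) + FW.ipj x (u t) j (u' t j))) = 0 := by
      rw [Finset.sum_add_distrib, sym (u' t) (u t), hfin]
      ring
    rw [hval] at hD
    exact hD
end
end

section
/- Suppose (u_h, r_h, w_h, p_h, s_h) solves the dissipative semi-discrete LDG Scheme D2 on [0,T]. Then for every t ∈ [0,T] the energy identity ∫_a^b ( s_h + ∂_t u_h )² dx + ∫_a^b ( p_h + ∂_t r_h )² dx + ∫_a^b u_h ( p_h + ∂_t r_h ) dx = 0 holds. -/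
open Polynomial Set

noncomputable section

lemma ip_poly (xl xr : ℝ) (A B : Polynomial ℝ) :
    IntervalIntegrable (fun y => A.eval y * B.eval y) MeasureTheory.volume xl xr :=
  (A.continuous.mul B.continuous).intervalIntegrable xl xr

lemma ip_add (xl xr : ℝ) (A B φ : Polynomial ℝ) :
    (∫ y in xl..xr, (A + B).eval y * φ.eval y)
      = (∫ y in xl..xr, A.eval y * φ.eval y) + ∫ y in xl..xr, B.eval y * φ.eval y := by
  rw [← intervalIntegral.integral_add (ip_poly xl xr A φ) (ip_poly xl xr B φ)]
  simp [add_mul]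

lemma ibp (xl xr : ℝ) (A B : Polynomial ℝ) :
    (∫ y in xl..xr, A.eval y * (derivative B).eval y)
      + (∫ y in xl..xr, B.eval y * (derivative A).eval y)
    = A.eval xr * B.eval xr - A.eval xl * B.eval xl := by
  have h : ∀ y ∈ Set.uIcc xl xr, HasDerivAt (fun z => (A*B).eval z) ((derivative (A*B)).eval y) y :=
    fun y _ => Polynomial.hasDerivAt _ y
  have cont : Continuous fun y : ℝ => (derivative (A*B)).eval y := Polynomial.continuous _
  have key : (∫ y in xl..xr, (derivative (A*B)).eval y) = (A*B).eval xr - (A*B).eval xl :=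
    intervalIntegral.integral_eq_sub_of_hasDerivAt h (cont.intervalIntegrable xl xr)
  calc (∫ y in xl..xr, A.eval y * (derivative B).eval y)
      + (∫ y in xl..xr, B.eval y * (derivative A).eval y)
      = ∫ y in xl..xr, (A.eval y * (derivative B).eval y + B.eval y * (derivative A).eval y) :=
        (intervalIntegral.integral_add (ip_poly xl xr A (derivative B))
          (ip_poly xl xr B (derivative A))).symm
    _ = ∫ y in xl..xr, (derivative (A*B)).eval y := by
        apply intervalIntegral.integral_congr
        intro y _
        simp only [derivative_mul, eval_add, eval_mul]
        ring
    _ = (A*B).eval xr - (A*B).eval xl := key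
    _ = A.eval xr * B.eval xr - A.eval xl * B.eval xl := by simp

lemma evalDeriv {k : ℕ} {T t : ℝ} (ht : t ∈ Set.Icc (0:ℝ) T)
    (v : ℝ → Polynomial ℝ) (d : Polynomial ℝ)
    (hdeg : ∀ σ ∈ Set.Icc (0:ℝ) T, (v σ).degree ≤ (k : WithBot ℕ))
    (hdd : d.degree ≤ (k : WithBot ℕ))
    (hd : ∀ m, HasDerivWithinAt (fun σ => (v σ).coeff m) (d.coeff m) (Set.Icc (0:ℝ) T) t)
    (y : ℝ) :
    HasDerivWithinAt (fun σ => (v σ).eval y) (d.eval y) (Set.Icc (0:ℝ) T) t := by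
  have h1 : HasDerivWithinAt (fun σ => ∑ m ∈ Finset.range (k+1), (v σ).coeff m * y ^ m)
      (∑ m ∈ Finset.range (k+1), d.coeff m * y ^ m) (Set.Icc (0:ℝ) T) t :=
    HasDerivWithinAt.fun_sum fun m _ => (hd m).mul_const _
  have he : ∀ σ ∈ Set.Icc (0:ℝ) T,
      (v σ).eval y = ∑ m ∈ Finset.range (k+1), (v σ).coeff m * y ^ m := fun σ hσ =>
    Polynomial.eval_eq_sum_range' (Nat.lt_succ_of_le (Polynomial.natDegree_le_iff_degree_le.2 (hdeg σ hσ))) y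
  have hde : d.eval y = ∑ m ∈ Finset.range (k+1), d.coeff m * y ^ m :=
    Polynomial.eval_eq_sum_range' (Nat.lt_succ_of_le (Polynomial.natDegree_le_iff_degree_le.2 hdd)) y
  rw [hde]
  exact h1.congr he (he t ht)

lemma ipDeriv {k : ℕ} {T t : ℝ} (ht : t ∈ Set.Icc (0:ℝ) T)
    (v : ℝ → Polynomial ℝ) (d : Polynomial ℝ)
    (hdeg : ∀ σ ∈ Set.Icc (0:ℝ) T, (v σ).degree ≤ (k : WithBot ℕ))
    (hdd : d.degree ≤ (k : WithBot ℕ))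
    (hd : ∀ m, HasDerivWithinAt (fun σ => (v σ).coeff m) (d.coeff m) (Set.Icc (0:ℝ) T) t)
    (xl xr : ℝ) (φ : Polynomial ℝ) :
    HasDerivWithinAt (fun σ => ∫ y in xl..xr, (v σ).eval y * φ.eval y)
      (∫ y in xl..xr, d.eval y * φ.eval y) (Set.Icc (0:ℝ) T) t := by
  have key : ∀ q : Polynomial ℝ, q.degree ≤ (k : WithBot ℕ) →
      (∫ y in xl..xr, q.eval y * φ.eval y)
        = ∑ m ∈ Finset.range (k+1), q.coeff m * ∫ y in xl..xr, y ^ m * φ.eval y := by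
    intro q hq
    have e1 : (∫ y in xl..xr, q.eval y * φ.eval y)
        = ∫ y in xl..xr, ∑ m ∈ Finset.range (k+1), q.coeff m * (y ^ m * φ.eval y) := by
      apply intervalIntegral.integral_congr
      intro y _
      simp only [Polynomial.eval_eq_sum_range'
        (Nat.lt_succ_of_le (Polynomial.natDegree_le_iff_degree_le.2 hq)) y, Finset.sum_mul,
        mul_assoc]
    rw [e1, intervalIntegral.integral_finset_sum]
    · exact Finset.sum_congr rfl fun m _ => intervalIntegral.integral_const_mul _ _
    · intro m _
      exact (continuous_const.mul ((continuous_pow m).mul φ.continuous)).intervalIntegrable xl xr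
  have h1 : HasDerivWithinAt
      (fun σ => ∑ m ∈ Finset.range (k+1), (v σ).coeff m * ∫ y in xl..xr, y ^ m * φ.eval y)
      (∑ m ∈ Finset.range (k+1), d.coeff m * ∫ y in xl..xr, y ^ m * φ.eval y)
      (Set.Icc (0:ℝ) T) t :=
    HasDerivWithinAt.fun_sum fun m _ => (hd m).mul_const _
  rw [key d hdd]
  exact h1.congr (fun σ hσ => key (v σ) (hdeg σ hσ)) (key (v t) (hdeg t ht))


theorem stmt18 {N : ℕ} [NeZero N] (hN : 1 ≤ N) (a b : ℝ) (hab : a < b)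
    (x : Fin (N + 1) → ℝ) (hx : StrictMono x) (hxa : x 0 = a) (hxb : x (Fin.last N) = b)
    (k : ℕ) (p : ℕ) (hp : 2 ≤ p) (T : ℝ) (hT : 0 < T)
    (u u' r r' w w' ph s : ℝ → Fin N → Polynomial ℝ)
    (hdeg : ∀ t ∈ Set.Icc (0:ℝ) T,
      FW.memV k (u t) ∧ FW.memV k (u' t) ∧ FW.memV k (r t) ∧ FW.memV k (r' t)
        ∧ FW.memV k (w t) ∧ FW.memV k (w' t) ∧ FW.memV k (ph t) ∧ FW.memV k (s t))
    (hderu : ∀ t ∈ Set.Icc (0:ℝ) T, ∀ (j : Fin N) (m : ℕ),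
      HasDerivWithinAt (fun σ => (u σ j).coeff m) ((u' t j).coeff m) (Set.Icc (0:ℝ) T) t)
    (hderr : ∀ t ∈ Set.Icc (0:ℝ) T, ∀ (j : Fin N) (m : ℕ),
      HasDerivWithinAt (fun σ => (r σ j).coeff m) ((r' t j).coeff m) (Set.Icc (0:ℝ) T) t)
    (hderw : ∀ t ∈ Set.Icc (0:ℝ) T, ∀ (j : Fin N) (m : ℕ),
      HasDerivWithinAt (fun σ => (w σ j).coeff m) ((w' t j).coeff m) (Set.Icc (0:ℝ) T) t)
    (heq1 : ∀ t ∈ Set.Icc (0:ℝ) T, ∀ (j : Fin N), ∀ φ : Polynomial ℝ,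
      φ.degree ≤ (k : WithBot ℕ) →
      FW.ipj x (u t) j φ - FW.bdj x (FW.trM x (r t)) j φ
          + FW.ipj x (r t) j (Polynomial.derivative φ)
        = FW.ipj x (w t) j φ)
    (heq2 : ∀ t ∈ Set.Icc (0:ℝ) T, ∀ (j : Fin N), ∀ φ : Polynomial ℝ,
      φ.degree ≤ (k : WithBot ℕ) →
      FW.ipj x (r t) j φ - FW.bdj x (FW.trP x (u t)) j φ
          + FW.ipj x (u t) j (Polynomial.derivative φ) = 0)
    (heq3 : ∀ t ∈ Set.Icc (0:ℝ) T, ∀ (j : Fin N), ∀ φ : Polynomial ℝ,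
      φ.degree ≤ (k : WithBot ℕ) →
      FW.ipj x (w' t) j φ + FW.ipj x (s t) j φ
        = FW.bdj x (FW.trM x (ph t)) j φ
          - FW.ipj x (ph t) j (Polynomial.derivative φ))
    (heq4 : ∀ t ∈ Set.Icc (0:ℝ) T, ∀ (j : Fin N), ∀ φ : Polynomial ℝ,
      φ.degree ≤ (k : WithBot ℕ) →
      FW.ipj x (ph t) j φ
        = FW.bdj x (FW.trP x (s t)) j φ
          - FW.ipj x (s t) j (Polynomial.derivative φ) - FW.ipj x (u t) j φ)
    (heq5 : ∀ t ∈ Set.Icc (0:ℝ) T, ∀ (j : Fin N), ∀ φ : Polynomial ℝ,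
      φ.degree ≤ (k : WithBot ℕ) →
      FW.ipj x (s t) j φ
        = FW.bdj x (fun i => FW.godunov (fun w => w ^ p / (p : ℝ)) (FW.trM x (u t) i) (FW.trP x (u t) i)) j φ
          - FW.ipfj x (fun w => w ^ p / (p : ℝ)) (u t) j (Polynomial.derivative φ)) :
    ∀ t ∈ Set.Icc (0:ℝ) T,
      (∑ j : Fin N, ∫ y in (x j.castSucc)..(x j.succ),
          ((s t j).eval y + (u' t j).eval y) ^ 2)
        + (∑ j : Fin N, ∫ y in (x j.castSucc)..(x j.succ),
          ((ph t j).eval y + (r' t j).eval y) ^ 2)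
        + (∑ j : Fin N, ∫ y in (x j.castSucc)..(x j.succ),
          (u t j).eval y * ((ph t j).eval y + (r' t j).eval y)) = 0 := by
  intro t ht
  obtain ⟨du, du', dr, dr', dw, dw', dph, ds⟩ := hdeg t ht
  have hU : UniqueDiffWithinAt ℝ (Set.Icc (0:ℝ) T) t := (uniqueDiffOn_Icc hT) t ht
  -- eval- and integral- derivatives of the families
  have Eu : ∀ (j : Fin N) (y : ℝ), HasDerivWithinAt (fun σ => (u σ j).eval y)
      ((u' t j).eval y) (Set.Icc (0:ℝ) T) t := fun j y =>
    evalDeriv (k := k) ht _ _ (fun σ hσ => (hdeg σ hσ).1 j) (du' j) (fun m => hderu t ht j m) y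
  have Er : ∀ (j : Fin N) (y : ℝ), HasDerivWithinAt (fun σ => (r σ j).eval y)
      ((r' t j).eval y) (Set.Icc (0:ℝ) T) t := fun j y =>
    evalDeriv (k := k) ht _ _ (fun σ hσ => (hdeg σ hσ).2.2.1 j) (dr' j) (fun m => hderr t ht j m) y
  have Iu : ∀ (j : Fin N) (φ : Polynomial ℝ), HasDerivWithinAt
      (fun σ => ∫ y in (x j.castSucc)..(x j.succ), (u σ j).eval y * φ.eval y)
      (∫ y in (x j.castSucc)..(x j.succ), (u' t j).eval y * φ.eval y) (Set.Icc (0:ℝ) T) t :=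
    fun j φ => ipDeriv (k := k) ht _ _ (fun σ hσ => (hdeg σ hσ).1 j) (du' j)
      (fun m => hderu t ht j m) _ _ φ
  have Ir : ∀ (j : Fin N) (φ : Polynomial ℝ), HasDerivWithinAt
      (fun σ => ∫ y in (x j.castSucc)..(x j.succ), (r σ j).eval y * φ.eval y)
      (∫ y in (x j.castSucc)..(x j.succ), (r' t j).eval y * φ.eval y) (Set.Icc (0:ℝ) T) t :=
    fun j φ => ipDeriv (k := k) ht _ _ (fun σ hσ => (hdeg σ hσ).2.2.1 j) (dr' j)
      (fun m => hderr t ht j m) _ _ φ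
  have Iw : ∀ (j : Fin N) (φ : Polynomial ℝ), HasDerivWithinAt
      (fun σ => ∫ y in (x j.castSucc)..(x j.succ), (w σ j).eval y * φ.eval y)
      (∫ y in (x j.castSucc)..(x j.succ), (w' t j).eval y * φ.eval y) (Set.Icc (0:ℝ) T) t :=
    fun j φ => ipDeriv (k := k) ht _ _ (fun σ hσ => (hdeg σ hσ).2.2.2.2.1 j) (dw' j)
      (fun m => hderw t ht j m) _ _ φ
  -- differentiated scheme equations
  have d1 : ∀ (j : Fin N) (φ : Polynomial ℝ), φ.degree ≤ (k : WithBot ℕ) →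
      FW.ipj x (u' t) j φ - FW.bdj x (FW.trM x (r' t)) j φ
        + FW.ipj x (r' t) j (derivative φ) = FW.ipj x (w' t) j φ := by
    intro j φ hφ
    have HF : HasDerivWithinAt
        (fun σ => FW.ipj x (u σ) j φ - FW.bdj x (FW.trM x (r σ)) j φ
          + FW.ipj x (r σ) j (derivative φ) - FW.ipj x (w σ) j φ)
        (FW.ipj x (u' t) j φ - FW.bdj x (FW.trM x (r' t)) j φ
          + FW.ipj x (r' t) j (derivative φ) - FW.ipj x (w' t) j φ) (Set.Icc (0:ℝ) T) t := by
      simp only [FW.ipj, FW.bdj, FW.trM]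
      exact (((Iu j φ).sub (((Er j (x j.succ)).mul_const _).sub
        ((Er (j-1) (x (j-1).succ)).mul_const _))).add (Ir j (derivative φ))).sub (Iw j φ)
    have h0 : ∀ σ ∈ Set.Icc (0:ℝ) T,
        FW.ipj x (u σ) j φ - FW.bdj x (FW.trM x (r σ)) j φ
          + FW.ipj x (r σ) j (derivative φ) - FW.ipj x (w σ) j φ = 0 := by
      intro σ hσ
      have := heq1 σ hσ j φ hφ
      linarith
    have Hz : HasDerivWithinAt (fun _ : ℝ => (0:ℝ))
        (FW.ipj x (u' t) j φ - FW.bdj x (FW.trM x (r' t)) j φ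
          + FW.ipj x (r' t) j (derivative φ) - FW.ipj x (w' t) j φ) (Set.Icc (0:ℝ) T) t :=
      HF.congr (fun σ hσ => (h0 σ hσ).symm) (h0 t ht).symm
    have e1 := Hz.derivWithin hU
    have e2 := (hasDerivWithinAt_const t (Set.Icc (0:ℝ) T) (0:ℝ)).derivWithin hU
    have := e1.symm.trans e2
    linarith
  have d2 : ∀ (j : Fin N) (φ : Polynomial ℝ), φ.degree ≤ (k : WithBot ℕ) →
      FW.ipj x (r' t) j φ - FW.bdj x (FW.trP x (u' t)) j φ
        + FW.ipj x (u' t) j (derivative φ) = 0 := by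
    intro j φ hφ
    have HF : HasDerivWithinAt
        (fun σ => FW.ipj x (r σ) j φ - FW.bdj x (FW.trP x (u σ)) j φ
          + FW.ipj x (u σ) j (derivative φ))
        (FW.ipj x (r' t) j φ - FW.bdj x (FW.trP x (u' t)) j φ
          + FW.ipj x (u' t) j (derivative φ)) (Set.Icc (0:ℝ) T) t := by
      simp only [FW.ipj, FW.bdj, FW.trP]
      exact ((Ir j φ).sub (((Eu (j+1) (x (j+1).castSucc)).mul_const _).sub
        ((Eu ((j-1)+1) (x ((j-1)+1).castSucc)).mul_const _))).add (Iu j (derivative φ))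
    have h0 : ∀ σ ∈ Set.Icc (0:ℝ) T,
        FW.ipj x (r σ) j φ - FW.bdj x (FW.trP x (u σ)) j φ
          + FW.ipj x (u σ) j (derivative φ) = 0 := fun σ hσ => heq2 σ hσ j φ hφ
    have Hz : HasDerivWithinAt (fun _ : ℝ => (0:ℝ))
        (FW.ipj x (r' t) j φ - FW.bdj x (FW.trP x (u' t)) j φ
          + FW.ipj x (u' t) j (derivative φ)) (Set.Icc (0:ℝ) T) t :=
      HF.congr (fun σ hσ => (h0 σ hσ).symm) (h0 t ht).symm
    have e1 := Hz.derivWithin hU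
    have e2 := (hasDerivWithinAt_const t (Set.Icc (0:ℝ) T) (0:ℝ)).derivWithin hU
    exact e1.symm.trans e2
  -- the combined piecewise polynomials
  set S : Fin N → Polynomial ℝ := fun j => s t j + u' t j with hS
  set P : Fin N → Polynomial ℝ := fun j => ph t j + r' t j with hP
  have degS : ∀ j, (S j).degree ≤ (k : WithBot ℕ) := fun j => by
    rw [hS]; exact (Polynomial.degree_add_le _ _).trans (max_le (ds j) (du' j))
  have degP : ∀ j, (P j).degree ≤ (k : WithBot ℕ) := fun j => by
    rw [hP]; exact (Polynomial.degree_add_le _ _).trans (max_le (dph j) (dr' j))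
  -- linearity decompositions
  have ipS : ∀ (j : Fin N) (φ : Polynomial ℝ),
      FW.ipj x S j φ = FW.ipj x (s t) j φ + FW.ipj x (u' t) j φ := fun j φ => by
    simp only [FW.ipj, hS]; exact ip_add _ _ _ _ _
  have ipP : ∀ (j : Fin N) (φ : Polynomial ℝ),
      FW.ipj x P j φ = FW.ipj x (ph t) j φ + FW.ipj x (r' t) j φ := fun j φ => by
    simp only [FW.ipj, hP]; exact ip_add _ _ _ _ _
  have bdMP : ∀ (j : Fin N) (φ : Polynomial ℝ),
      FW.bdj x (FW.trM x P) j φ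
        = FW.bdj x (FW.trM x (ph t)) j φ + FW.bdj x (FW.trM x (r' t)) j φ := fun j φ => by
    simp only [FW.bdj, FW.trM, hP, Polynomial.eval_add]; ring
  have bdPS : ∀ (j : Fin N) (φ : Polynomial ℝ),
      FW.bdj x (FW.trP x S) j φ
        = FW.bdj x (FW.trP x (s t)) j φ + FW.bdj x (FW.trP x (u' t)) j φ := fun j φ => by
    simp only [FW.bdj, FW.trP, hS, Polynomial.eval_add]; ring
  -- the two energy relations
  have hA : ∀ j : Fin N, FW.ipj x S j (S j)
      = -(FW.ipj x P j (derivative (S j))) + FW.bdj x (FW.trM x P) j (S j) := by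
    intro j
    have h1 := d1 j (S j) (degS j)
    have h2 := heq3 t ht j (S j) (degS j)
    rw [ipS, ipP, bdMP]
    linarith
  have hB : ∀ j : Fin N, FW.ipj x P j (P j) + FW.ipj x (u t) j (P j)
      = -(FW.ipj x S j (derivative (P j))) + FW.bdj x (FW.trP x S) j (P j) := by
    intro j
    have h1 := d2 j (P j) (degP j)
    have h2 := heq4 t ht j (P j) (degP j)
    rw [ipP, ipS, bdPS]
    linarith
  -- integration by parts per cell
  have hI : ∀ j : Fin N, FW.ipj x P j (derivative (S j)) + FW.ipj x S j (derivative (P j))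
      = (P j).eval (x j.succ) * (S j).eval (x j.succ)
        - (P j).eval (x j.castSucc) * (S j).eval (x j.castSucc) := fun j => by
    simp only [FW.ipj]; exact ibp _ _ _ _
  have hsub : ∀ j : Fin N, (j - 1) + 1 = j := fun j => sub_add_cancel j 1
  -- per-cell telescoping identity
  set G : Fin N → ℝ := fun j => FW.trP x S j * FW.trM x P j with hG
  have key : ∀ j : Fin N,
      FW.ipj x S j (S j) + FW.ipj x P j (P j) + FW.ipj x (u t) j (P j)
        = G j - G (j - 1) := by
    intro j
    have hIj := hI j
    rw [hA j]
    have hBj := hB j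
    simp only [FW.bdj, FW.trM, FW.trP, hG, hsub]
    simp only [FW.bdj, FW.trM, FW.trP, hsub] at hBj
    linarith
  -- sum over cells
  have g1 : ∀ j : Fin N, (∫ y in (x j.castSucc)..(x j.succ),
      ((s t j).eval y + (u' t j).eval y) ^ 2) = FW.ipj x S j (S j) := fun j => by
    simp only [FW.ipj, hS, Polynomial.eval_add]
    apply intervalIntegral.integral_congr
    intro y _
    simp only []
    ring
  have g2 : ∀ j : Fin N, (∫ y in (x j.castSucc)..(x j.succ),
      ((ph t j).eval y + (r' t j).eval y) ^ 2) = FW.ipj x P j (P j) := fun j => by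
    simp only [FW.ipj, hP, Polynomial.eval_add]
    apply intervalIntegral.integral_congr
    intro y _
    simp only []
    ring
  have g3 : ∀ j : Fin N, (∫ y in (x j.castSucc)..(x j.succ),
      (u t j).eval y * ((ph t j).eval y + (r' t j).eval y)) = FW.ipj x (u t) j (P j) := fun j => by
    simp only [FW.ipj, hP, Polynomial.eval_add]
  have e1 : (∑ j : Fin N, ∫ y in (x j.castSucc)..(x j.succ),
      ((s t j).eval y + (u' t j).eval y) ^ 2) = ∑ j : Fin N, FW.ipj x S j (S j) :=
    Finset.sum_congr rfl fun j _ => g1 j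
  have e2 : (∑ j : Fin N, ∫ y in (x j.castSucc)..(x j.succ),
      ((ph t j).eval y + (r' t j).eval y) ^ 2) = ∑ j : Fin N, FW.ipj x P j (P j) :=
    Finset.sum_congr rfl fun j _ => g2 j
  have e3 : (∑ j : Fin N, ∫ y in (x j.castSucc)..(x j.succ),
      (u t j).eval y * ((ph t j).eval y + (r' t j).eval y))
        = ∑ j : Fin N, FW.ipj x (u t) j (P j) :=
    Finset.sum_congr rfl fun j _ => g3 j
  rw [e1, e2, e3, ← Finset.sum_add_distrib, ← Finset.sum_add_distrib,
    Finset.sum_congr rfl fun j _ => key j, Finset.sum_sub_distrib]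
  have shift : ∑ j : Fin N, G (j - 1) = ∑ j : Fin N, G j :=
    Fintype.sum_equiv (Equiv.subRight 1) _ _ fun j => rfl
  rw [shift, sub_self]
end
end

section
/- Suppose (u_h, r_h, w_h, p_h, s_h) solves the conservative semi-discrete LDG Scheme C2 on [0,T]. Then for every t ∈ [0,T] the energy identity ∫_a^b ( s_h + ∂_t u_h )² dx + ∫_a^b ( p_h + ∂_t r_h )² dx + ∫_a^b u_h ( p_h + ∂_t r_h ) dx = 0 holds. -/
open Polynomial Set

noncomputable section

namespace C2P
open FW

variable {N : ℕ}

lemma II (P Q : Polynomial ℝ) (c d : ℝ) :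
    IntervalIntegrable (fun y => P.eval y * Q.eval y) MeasureTheory.volume c d :=
  (P.continuous.mul Q.continuous).intervalIntegrable c d

lemma eval_expand (k : ℕ) (P : Polynomial ℝ) (h : P.degree ≤ (k : WithBot ℕ)) (c : ℝ) :
    P.eval c = ∑ m ∈ Finset.range (k + 1), P.coeff m * c ^ m :=
  eval_eq_sum_range' (Nat.lt_succ_of_le (natDegree_le_iff_degree_le.mpr h)) c

lemma ipj_expand (x : Fin (N + 1) → ℝ) (k : ℕ) (P : Fin N → Polynomial ℝ) (j : Fin N)
    (φ : Polynomial ℝ) (h : (P j).degree ≤ (k : WithBot ℕ)) :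
    ipj x P j φ = ∑ m ∈ Finset.range (k + 1), (P j).coeff m *
      ∫ y in (x j.castSucc)..(x j.succ), y ^ m * φ.eval y := by
  unfold FW.ipj
  have key : ∀ y : ℝ, (P j).eval y * φ.eval y
      = ∑ m ∈ Finset.range (k + 1), (P j).coeff m * (y ^ m * φ.eval y) := by
    intro y
    rw [eval_expand k _ h y, Finset.sum_mul]
    simp [mul_assoc]
  simp only [key]
  rw [intervalIntegral.integral_finset_sum]
  · simp [intervalIntegral.integral_const_mul]
  · intro m _
    exact (continuous_const.mul ((continuous_pow m).mul φ.continuous)).intervalIntegrable _ _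

section deriv
variable {T : ℝ} {v v' : ℝ → Fin N → Polynomial ℝ} {t : ℝ} {k : ℕ}

lemma hasDeriv_eval (ht : t ∈ Set.Icc (0:ℝ) T)
    (hdeg : ∀ σ ∈ Set.Icc (0:ℝ) T, memV k (v σ)) (hdeg' : memV k (v' t))
    (hder : ∀ (j : Fin N) (m : ℕ), HasDerivWithinAt (fun σ => (v σ j).coeff m)
      ((v' t j).coeff m) (Set.Icc (0:ℝ) T) t)
    (j : Fin N) (c : ℝ) :
    HasDerivWithinAt (fun σ => (v σ j).eval c) ((v' t j).eval c) (Set.Icc (0:ℝ) T) t := by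
  have h1 : HasDerivWithinAt (fun σ => ∑ m ∈ Finset.range (k + 1), (v σ j).coeff m * c ^ m)
      (∑ m ∈ Finset.range (k + 1), (v' t j).coeff m * c ^ m) (Set.Icc (0:ℝ) T) t :=
    HasDerivWithinAt.fun_sum (fun m _ => (hder j m).mul_const _)
  rw [← eval_expand k _ (hdeg' j) c] at h1
  exact h1.congr (fun σ hσ => eval_expand k _ (hdeg σ hσ j) c) (eval_expand k _ (hdeg t ht j) c)

lemma hasDeriv_ipj (x : Fin (N + 1) → ℝ) (ht : t ∈ Set.Icc (0:ℝ) T)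
    (hdeg : ∀ σ ∈ Set.Icc (0:ℝ) T, memV k (v σ)) (hdeg' : memV k (v' t))
    (hder : ∀ (j : Fin N) (m : ℕ), HasDerivWithinAt (fun σ => (v σ j).coeff m)
      ((v' t j).coeff m) (Set.Icc (0:ℝ) T) t)
    (j : Fin N) (φ : Polynomial ℝ) :
    HasDerivWithinAt (fun σ => ipj x (v σ) j φ) (ipj x (v' t) j φ) (Set.Icc (0:ℝ) T) t := by
  have h1 : HasDerivWithinAt
      (fun σ => ∑ m ∈ Finset.range (k + 1), (v σ j).coeff m *
        ∫ y in (x j.castSucc)..(x j.succ), y ^ m * φ.eval y)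
      (∑ m ∈ Finset.range (k + 1), (v' t j).coeff m *
        ∫ y in (x j.castSucc)..(x j.succ), y ^ m * φ.eval y) (Set.Icc (0:ℝ) T) t :=
    HasDerivWithinAt.fun_sum (fun m _ => (hder j m).mul_const _)
  rw [← ipj_expand x k _ j φ (hdeg' j)] at h1
  exact h1.congr (fun σ hσ => ipj_expand x k _ j φ (hdeg σ hσ j))
    (ipj_expand x k _ j φ (hdeg t ht j))

lemma hasDeriv_bdjA [NeZero N] (x : Fin (N + 1) → ℝ) (ht : t ∈ Set.Icc (0:ℝ) T)
    (hdeg : ∀ σ ∈ Set.Icc (0:ℝ) T, memV k (v σ)) (hdeg' : memV k (v' t))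
    (hder : ∀ (j : Fin N) (m : ℕ), HasDerivWithinAt (fun σ => (v σ j).coeff m)
      ((v' t j).coeff m) (Set.Icc (0:ℝ) T) t)
    (j : Fin N) (φ : Polynomial ℝ) :
    HasDerivWithinAt (fun σ => bdj x (trA x (v σ)) j φ) (bdj x (trA x (v' t)) j φ)
      (Set.Icc (0:ℝ) T) t := by
  unfold FW.bdj FW.trA FW.trP FW.trM
  exact ((((hasDeriv_eval ht hdeg hdeg' hder _ _).add
      (hasDeriv_eval ht hdeg hdeg' hder _ _)).div_const 2).mul_const _).sub
    ((((hasDeriv_eval ht hdeg hdeg' hder _ _).add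
      (hasDeriv_eval ht hdeg hdeg' hder _ _)).div_const 2).mul_const _)

end deriv
end C2P

namespace C2P
open FW
variable {N : ℕ}

lemma ipj_add (x : Fin (N + 1) → ℝ) (P R : Fin N → Polynomial ℝ) (j : Fin N)
    (φ : Polynomial ℝ) :
    ipj x (fun i => P i + R i) j φ = ipj x P j φ + ipj x R j φ := by
  unfold FW.ipj
  rw [← intervalIntegral.integral_add (II _ _ _ _) (II _ _ _ _)]
  simp [add_mul]

lemma bdjA_add [NeZero N] (x : Fin (N + 1) → ℝ) (P R : Fin N → Polynomial ℝ) (j : Fin N)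
    (φ : Polynomial ℝ) :
    bdj x (trA x (fun i => P i + R i)) j φ = bdj x (trA x P) j φ + bdj x (trA x R) j φ := by
  unfold FW.bdj FW.trA FW.trP FW.trM
  simp only [eval_add]
  ring

/-- integration by parts on a cell -/
lemma ibp (P Q : Polynomial ℝ) (c d : ℝ) :
    (∫ y in c..d, P.eval y * (derivative Q).eval y)
      + ∫ y in c..d, Q.eval y * (derivative P).eval y
      = P.eval d * Q.eval d - P.eval c * Q.eval c := by
  rw [← intervalIntegral.integral_add (II _ _ _ _) (II _ _ _ _)]
  have : ∀ y ∈ Set.uIcc c d, HasDerivAt (fun z => P.eval z * Q.eval z)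
      (P.eval y * (derivative Q).eval y + Q.eval y * (derivative P).eval y) y := by
    intro y _
    have := (P.hasDerivAt y).mul (Q.hasDerivAt y)
    exact this.congr_deriv (by ring)
  rw [intervalIntegral.integral_eq_sub_of_hasDerivAt this
    ((((P.continuous.mul (derivative Q).continuous).add
      (Q.continuous.mul (derivative P).continuous))).intervalIntegrable _ _)]

lemma sum_shift [NeZero N] (g : Fin N → ℝ) : ∑ j, g (j - 1) = ∑ j, g j :=
  Fintype.sum_equiv (Equiv.subRight 1) _ _ (fun _ => rfl)

lemma trP_pred [NeZero N] (x : Fin (N + 1) → ℝ) (P : Fin N → Polynomial ℝ) (j : Fin N) :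
    trP x P (j - 1) = (P j).eval (x j.castSucc) := by
  simp [FW.trP, sub_add_cancel]

end C2P


theorem stmt19 {N : ℕ} [NeZero N] (hN : 1 ≤ N) (a b : ℝ) (hab : a < b)
    (x : Fin (N + 1) → ℝ) (hx : StrictMono x) (hxa : x 0 = a) (hxb : x (Fin.last N) = b)
    (k : ℕ) (p : ℕ) (hp : 2 ≤ p) (T : ℝ) (hT : 0 < T)
    (u u' r r' w w' ph s : ℝ → Fin N → Polynomial ℝ)
    (hdeg : ∀ t ∈ Set.Icc (0:ℝ) T,
      FW.memV k (u t) ∧ FW.memV k (u' t) ∧ FW.memV k (r t) ∧ FW.memV k (r' t)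
        ∧ FW.memV k (w t) ∧ FW.memV k (w' t) ∧ FW.memV k (ph t) ∧ FW.memV k (s t))
    (hderu : ∀ t ∈ Set.Icc (0:ℝ) T, ∀ (j : Fin N) (m : ℕ),
      HasDerivWithinAt (fun σ => (u σ j).coeff m) ((u' t j).coeff m) (Set.Icc (0:ℝ) T) t)
    (hderr : ∀ t ∈ Set.Icc (0:ℝ) T, ∀ (j : Fin N) (m : ℕ),
      HasDerivWithinAt (fun σ => (r σ j).coeff m) ((r' t j).coeff m) (Set.Icc (0:ℝ) T) t)
    (hderw : ∀ t ∈ Set.Icc (0:ℝ) T, ∀ (j : Fin N) (m : ℕ),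
      HasDerivWithinAt (fun σ => (w σ j).coeff m) ((w' t j).coeff m) (Set.Icc (0:ℝ) T) t)
    (heq1 : ∀ t ∈ Set.Icc (0:ℝ) T, ∀ (j : Fin N), ∀ φ : Polynomial ℝ,
      φ.degree ≤ (k : WithBot ℕ) →
      FW.ipj x (u t) j φ - FW.bdj x (FW.trA x (r t)) j φ
          + FW.ipj x (r t) j (Polynomial.derivative φ)
        = FW.ipj x (w t) j φ)
    (heq2 : ∀ t ∈ Set.Icc (0:ℝ) T, ∀ (j : Fin N), ∀ φ : Polynomial ℝ,
      φ.degree ≤ (k : WithBot ℕ) →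
      FW.ipj x (r t) j φ - FW.bdj x (FW.trA x (u t)) j φ
          + FW.ipj x (u t) j (Polynomial.derivative φ) = 0)
    (heq3 : ∀ t ∈ Set.Icc (0:ℝ) T, ∀ (j : Fin N), ∀ φ : Polynomial ℝ,
      φ.degree ≤ (k : WithBot ℕ) →
      FW.ipj x (w' t) j φ + FW.ipj x (s t) j φ
        = FW.bdj x (FW.trA x (ph t)) j φ
          - FW.ipj x (ph t) j (Polynomial.derivative φ))
    (heq4 : ∀ t ∈ Set.Icc (0:ℝ) T, ∀ (j : Fin N), ∀ φ : Polynomial ℝ,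
      φ.degree ≤ (k : WithBot ℕ) →
      FW.ipj x (ph t) j φ
        = FW.bdj x (FW.trA x (s t)) j φ
          - FW.ipj x (s t) j (Polynomial.derivative φ) - FW.ipj x (u t) j φ)
    (heq5 : ∀ t ∈ Set.Icc (0:ℝ) T, ∀ (j : Fin N), ∀ φ : Polynomial ℝ,
      φ.degree ≤ (k : WithBot ℕ) →
      FW.ipj x (s t) j φ
        = FW.bdj x (fun i => FW.consFlux p (FW.trM x (u t) i) (FW.trP x (u t) i)) j φ
          - FW.ipfj x (fun w => w ^ p / (p : ℝ)) (u t) j (Polynomial.derivative φ)) :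
    ∀ t ∈ Set.Icc (0:ℝ) T,
      (∑ j : Fin N, ∫ y in (x j.castSucc)..(x j.succ),
          ((s t j).eval y + (u' t j).eval y) ^ 2)
        + (∑ j : Fin N, ∫ y in (x j.castSucc)..(x j.succ),
          ((ph t j).eval y + (r' t j).eval y) ^ 2)
        + (∑ j : Fin N, ∫ y in (x j.castSucc)..(x j.succ),
          (u t j).eval y * ((ph t j).eval y + (r' t j).eval y)) = 0 := by
  intro t ht
  obtain ⟨hdu, hdu', hdr, hdr', hdw, hdw', hdph, hds⟩ := hdeg t ht
  have hut : UniqueDiffWithinAt ℝ (Set.Icc (0:ℝ) T) t := (uniqueDiffOn_Icc hT) t ht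
  have hdegu : ∀ σ ∈ Set.Icc (0:ℝ) T, FW.memV k (u σ) := fun σ hσ => (hdeg σ hσ).1
  have hdegr : ∀ σ ∈ Set.Icc (0:ℝ) T, FW.memV k (r σ) := fun σ hσ => (hdeg σ hσ).2.2.1
  have hdegw : ∀ σ ∈ Set.Icc (0:ℝ) T, FW.memV k (w σ) := fun σ hσ => (hdeg σ hσ).2.2.2.2.1
  -- time-differentiated scheme equation (ii)
  have eq2' : ∀ (j : Fin N) (φ : Polynomial ℝ), φ.degree ≤ (k : WithBot ℕ) →
      FW.ipj x (r' t) j φ - FW.bdj x (FW.trA x (u' t)) j φ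
        + FW.ipj x (u' t) j (Polynomial.derivative φ) = 0 := by
    intro j φ hφ
    have hF : HasDerivWithinAt
        (fun σ => FW.ipj x (r σ) j φ - FW.bdj x (FW.trA x (u σ)) j φ
          + FW.ipj x (u σ) j (Polynomial.derivative φ))
        (FW.ipj x (r' t) j φ - FW.bdj x (FW.trA x (u' t)) j φ
          + FW.ipj x (u' t) j (Polynomial.derivative φ)) (Set.Icc (0:ℝ) T) t :=
      ((C2P.hasDeriv_ipj x ht hdegr hdr' (hderr t ht) j φ).sub
        (C2P.hasDeriv_bdjA x ht hdegu hdu' (hderu t ht) j φ)).add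
        (C2P.hasDeriv_ipj x ht hdegu hdu' (hderu t ht) j (Polynomial.derivative φ))
    have hz : HasDerivWithinAt (fun _ : ℝ => (0:ℝ))
        (FW.ipj x (r' t) j φ - FW.bdj x (FW.trA x (u' t)) j φ
          + FW.ipj x (u' t) j (Polynomial.derivative φ)) (Set.Icc (0:ℝ) T) t :=
      hF.congr (fun σ hσ => (heq2 σ hσ j φ hφ).symm) (heq2 t ht j φ hφ).symm
    exact (hz.derivWithin hut).symm.trans ((hasDerivWithinAt_const t _ (0:ℝ)).derivWithin hut)
  -- time-differentiated scheme equation (i)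
  have eq1' : ∀ (j : Fin N) (φ : Polynomial ℝ), φ.degree ≤ (k : WithBot ℕ) →
      FW.ipj x (u' t) j φ - FW.bdj x (FW.trA x (r' t)) j φ
        + FW.ipj x (r' t) j (Polynomial.derivative φ) = FW.ipj x (w' t) j φ := by
    intro j φ hφ
    have hF : HasDerivWithinAt
        (fun σ => FW.ipj x (u σ) j φ - FW.bdj x (FW.trA x (r σ)) j φ
          + FW.ipj x (r σ) j (Polynomial.derivative φ) - FW.ipj x (w σ) j φ)
        (FW.ipj x (u' t) j φ - FW.bdj x (FW.trA x (r' t)) j φ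
          + FW.ipj x (r' t) j (Polynomial.derivative φ) - FW.ipj x (w' t) j φ)
        (Set.Icc (0:ℝ) T) t :=
      (((C2P.hasDeriv_ipj x ht hdegu hdu' (hderu t ht) j φ).sub
        (C2P.hasDeriv_bdjA x ht hdegr hdr' (hderr t ht) j φ)).add
        (C2P.hasDeriv_ipj x ht hdegr hdr' (hderr t ht) j (Polynomial.derivative φ))).sub
        (C2P.hasDeriv_ipj x ht hdegw hdw' (hderw t ht) j φ)
    have hz : HasDerivWithinAt (fun _ : ℝ => (0:ℝ))
        (FW.ipj x (u' t) j φ - FW.bdj x (FW.trA x (r' t)) j φ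
          + FW.ipj x (r' t) j (Polynomial.derivative φ) - FW.ipj x (w' t) j φ)
        (Set.Icc (0:ℝ) T) t := by
      refine hF.congr (fun σ hσ => ?_) ?_
      · rw [heq1 σ hσ j φ hφ]; ring
      · rw [heq1 t ht j φ hφ]; ring
    have h0 := (hz.derivWithin hut).symm.trans
      ((hasDerivWithinAt_const t _ (0:ℝ)).derivWithin hut)
    linarith
  -- combined piecewise polynomials
  set E : Fin N → Polynomial ℝ := fun i => s t i + u' t i with hEdef
  set Q : Fin N → Polynomial ℝ := fun i => ph t i + r' t i with hQdef
  have hdegE : ∀ j, (E j).degree ≤ (k : WithBot ℕ) := fun j =>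
    le_trans (Polynomial.degree_add_le _ _) (max_le (hds j) (hdu' j))
  have hdegQ : ∀ j, (Q j).degree ≤ (k : WithBot ℕ) := fun j =>
    le_trans (Polynomial.degree_add_le _ _) (max_le (hdph j) (hdr' j))
  -- equation (A): (Q, φ) = ⟨{E}, φ⟩ - (E, φ') - (u, φ)
  have hA : ∀ j : Fin N, FW.ipj x Q j (Q j)
      = FW.bdj x (FW.trA x E) j (Q j) - FW.ipj x E j (Polynomial.derivative (Q j))
        - FW.ipj x (u t) j (Q j) := by
    intro j
    have h4 := heq4 t ht j (Q j) (hdegQ j)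
    have h2 := eq2' j (Q j) (hdegQ j)
    have e1 : FW.ipj x Q j (Q j) = FW.ipj x (ph t) j (Q j) + FW.ipj x (r' t) j (Q j) := by
      rw [hQdef]; exact C2P.ipj_add x (ph t) (r' t) j (Q j)
    have e2 : FW.bdj x (FW.trA x E) j (Q j)
        = FW.bdj x (FW.trA x (s t)) j (Q j) + FW.bdj x (FW.trA x (u' t)) j (Q j) := by
      rw [hEdef]; exact C2P.bdjA_add x (s t) (u' t) j (Q j)
    have e3 : FW.ipj x E j (Polynomial.derivative (Q j))
        = FW.ipj x (s t) j (Polynomial.derivative (Q j))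
          + FW.ipj x (u' t) j (Polynomial.derivative (Q j)) := by
      rw [hEdef]; exact C2P.ipj_add x (s t) (u' t) j _
    linarith
  -- equation (B): (E, φ) = ⟨{Q}, φ⟩ - (Q, φ')
  have hB : ∀ j : Fin N, FW.ipj x E j (E j)
      = FW.bdj x (FW.trA x Q) j (E j) - FW.ipj x Q j (Polynomial.derivative (E j)) := by
    intro j
    have h3 := heq3 t ht j (E j) (hdegE j)
    have h1 := eq1' j (E j) (hdegE j)
    have e1 : FW.ipj x E j (E j) = FW.ipj x (s t) j (E j) + FW.ipj x (u' t) j (E j) := by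
      rw [hEdef]; exact C2P.ipj_add x (s t) (u' t) j _
    have e2 : FW.bdj x (FW.trA x Q) j (E j)
        = FW.bdj x (FW.trA x (ph t)) j (E j) + FW.bdj x (FW.trA x (r' t)) j (E j) := by
      rw [hQdef]; exact C2P.bdjA_add x (ph t) (r' t) j _
    have e3 : FW.ipj x Q j (Polynomial.derivative (E j))
        = FW.ipj x (ph t) j (Polynomial.derivative (E j))
          + FW.ipj x (r' t) j (Polynomial.derivative (E j)) := by
      rw [hQdef]; exact C2P.ipj_add x (ph t) (r' t) j _
    linarith
  -- per-cell identity
  have key : ∀ j : Fin N, FW.ipj x E j (E j) + FW.ipj x Q j (Q j) + FW.ipj x (u t) j (Q j)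
      = (FW.trA x Q j * FW.trM x E j + FW.trA x E j * FW.trM x Q j
          - FW.trM x E j * FW.trM x Q j)
        + (-(FW.trA x Q (j - 1) * FW.trP x E (j - 1))
          - FW.trA x E (j - 1) * FW.trP x Q (j - 1)
          + FW.trP x E (j - 1) * FW.trP x Q (j - 1)) := by
    intro j
    have hibp : FW.ipj x E j (Polynomial.derivative (Q j))
        + FW.ipj x Q j (Polynomial.derivative (E j))
        = FW.trM x E j * FW.trM x Q j - FW.trP x E (j - 1) * FW.trP x Q (j - 1) := by
      have h := C2P.ibp (E j) (Q j) (x j.castSucc) (x j.succ)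
      simp only [FW.ipj, FW.trM, C2P.trP_pred]
      exact h
    have hbd1 : FW.bdj x (FW.trA x Q) j (E j)
        = FW.trA x Q j * FW.trM x E j - FW.trA x Q (j - 1) * FW.trP x E (j - 1) := by
      simp [FW.bdj, FW.trM, C2P.trP_pred]
    have hbd2 : FW.bdj x (FW.trA x E) j (Q j)
        = FW.trA x E j * FW.trM x Q j - FW.trA x E (j - 1) * FW.trP x Q (j - 1) := by
      simp [FW.bdj, FW.trM, C2P.trP_pred]
    have := hA j
    have := hB j
    linarith
  -- rewrite the goal in terms of ipj
  have g1 : ∀ j : Fin N, (∫ y in (x j.castSucc)..(x j.succ),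
      ((s t j).eval y + (u' t j).eval y) ^ 2) = FW.ipj x E j (E j) := by
    intro j
    simp only [FW.ipj, hEdef, Polynomial.eval_add, pow_two]
  have g2 : ∀ j : Fin N, (∫ y in (x j.castSucc)..(x j.succ),
      ((ph t j).eval y + (r' t j).eval y) ^ 2) = FW.ipj x Q j (Q j) := by
    intro j
    simp only [FW.ipj, hQdef, Polynomial.eval_add, pow_two]
  have g3 : ∀ j : Fin N, (∫ y in (x j.castSucc)..(x j.succ),
      (u t j).eval y * ((ph t j).eval y + (r' t j).eval y)) = FW.ipj x (u t) j (Q j) := by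
    intro j
    simp only [FW.ipj, hQdef, Polynomial.eval_add]
  calc (∑ j : Fin N, ∫ y in (x j.castSucc)..(x j.succ),
          ((s t j).eval y + (u' t j).eval y) ^ 2)
        + (∑ j : Fin N, ∫ y in (x j.castSucc)..(x j.succ),
          ((ph t j).eval y + (r' t j).eval y) ^ 2)
        + (∑ j : Fin N, ∫ y in (x j.castSucc)..(x j.succ),
          (u t j).eval y * ((ph t j).eval y + (r' t j).eval y))
      = ∑ j : Fin N, (FW.ipj x E j (E j) + FW.ipj x Q j (Q j) + FW.ipj x (u t) j (Q j)) := by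
        rw [Finset.sum_congr rfl (fun j _ => g1 j), Finset.sum_congr rfl (fun j _ => g2 j),
          Finset.sum_congr rfl (fun j _ => g3 j), ← Finset.sum_add_distrib,
          ← Finset.sum_add_distrib]
    _ = (∑ j : Fin N, (FW.trA x Q j * FW.trM x E j + FW.trA x E j * FW.trM x Q j
          - FW.trM x E j * FW.trM x Q j))
        + ∑ j : Fin N, (-(FW.trA x Q (j - 1) * FW.trP x E (j - 1))
          - FW.trA x E (j - 1) * FW.trP x Q (j - 1)
          + FW.trP x E (j - 1) * FW.trP x Q (j - 1)) := by
        rw [Finset.sum_congr rfl (fun j _ => key j), Finset.sum_add_distrib]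
    _ = ∑ j : Fin N, ((FW.trA x Q j * FW.trM x E j + FW.trA x E j * FW.trM x Q j
          - FW.trM x E j * FW.trM x Q j)
        + (-(FW.trA x Q j * FW.trP x E j) - FW.trA x E j * FW.trP x Q j
          + FW.trP x E j * FW.trP x Q j)) := by
        rw [C2P.sum_shift (fun i => -(FW.trA x Q i * FW.trP x E i)
          - FW.trA x E i * FW.trP x Q i + FW.trP x E i * FW.trP x Q i),
          ← Finset.sum_add_distrib]
    _ = 0 := by
        apply Finset.sum_eq_zero
        intro j _
        simp only [FW.trA]
        ring
end
end
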